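/- arXiv:2403.02924 — 3 statements merged into one kernel-verified Lean document; each statement's English description precedes it below -/
import Mathlib

section
/- Let Γ = (G, σ) be a signed graph on n vertices with frustration index l(Γ), and let 1 ≤ k ≤ n−1. Then the frustration index of its k-token signed graph satisfies l(Γ) ≤ l(F_k(Γ)) ≤ C(n−2, k−1)·l(Γ). -/
open scoped Classical

/-- A signed graph: a simple graph together with a signature assigning a sign `±1`
(an element of `ℤˣ`) to each pair of vertices (only the values on edges are relevant). -/
structure SignedGraph (V : Type*) where
  G : SimpleGraph V
  sign : V → V → ℤˣ
  sign_symm : ∀ u v, sign u v = sign v u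

namespace SignedGraph

variable {V W : Type*}

/-- The sign function, as a function on unordered pairs. -/
def esign (Γ : SignedGraph V) : Sym2 V → ℤˣ :=
  Sym2.lift ⟨Γ.sign, Γ.sign_symm⟩

/-- The sign of a walk: the product of the signs of its edges. -/
def walkSign (Γ : SignedGraph V) {u v : V} (p : Γ.G.Walk u v) : ℤˣ :=
  (p.edges.map Γ.esign).prod

/-- A signed graph is balanced if every cycle is positive. -/
def Balanced (Γ : SignedGraph V) : Prop :=
  ∀ ⦃u : V⦄ (p : Γ.G.Walk u u), p.IsCycle → Γ.walkSign p = 1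

/-- Switching at a vertex subset `U`: reverse the sign of every edge with exactly one
endpoint in `U`. -/
noncomputable def switch (Γ : SignedGraph V) (U : Set V) : SignedGraph V where
  G := Γ.G
  sign u v := (if u ∈ U then (-1 : ℤˣ) else 1) * (if v ∈ U then (-1 : ℤˣ) else 1) * Γ.sign u v
  sign_symm u v := by
    rw [Γ.sign_symm u v, mul_comm (if u ∈ U then (-1 : ℤˣ) else 1) (if v ∈ U then (-1 : ℤˣ) else 1)]

/-- Two signed graphs on the same vertex set are "the same signed graph" when they have the
same underlying graph and the same signature on every edge. -/
def SEq (Γ Γ' : SignedGraph V) : Prop :=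
  Γ.G = Γ'.G ∧ ∀ u v, Γ.G.Adj u v → Γ.sign u v = Γ'.sign u v

/-- Switching equivalence of two signed graphs on the same vertex set. -/
def SwitchEquiv (Γ Γ' : SignedGraph V) : Prop :=
  ∃ U : Set V, (Γ.switch U).SEq Γ'

/-- A sign-preserving isomorphism of signed graphs. -/
structure Iso (Γ : SignedGraph V) (Γ' : SignedGraph W) where
  toEquiv : V ≃ W
  adj_iff : ∀ u v, Γ.G.Adj u v ↔ Γ'.G.Adj (toEquiv u) (toEquiv v)
  sign_eq : ∀ u v, Γ.G.Adj u v → Γ.sign u v = Γ'.sign (toEquiv u) (toEquiv v)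

/-- Switching isomorphism: `Γ'` is isomorphic to a switching of `Γ`. -/
def SwitchIso (Γ : SignedGraph V) (Γ' : SignedGraph W) : Prop :=
  ∃ U : Set V, Nonempty ((Γ.switch U).Iso Γ')

/-- The negation of a signed graph: all edge signs reversed. -/
def neg (Γ : SignedGraph V) : SignedGraph V where
  G := Γ.G
  sign u v := -Γ.sign u v
  sign_symm u v := by rw [Γ.sign_symm]

variable [DecidableEq V]

/-- The underlying graph of the `k`-token graph: vertices are the `k`-subsets of `V`,
with `A ~ B` when `A Δ B = {a, b}`, `a ∈ A`, `b ∈ B` and `a ~ b` in `G`. -/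
def tokenAdj (G : SimpleGraph V) (k : ℕ) : SimpleGraph {A : Finset V // A.card = k} where
  Adj A B := ∃ a b, a ∈ A.1 ∧ b ∈ B.1 ∧ G.Adj a b ∧ symmDiff A.1 B.1 = {a, b}
  symm := by
    constructor
    rintro A B ⟨a, b, ha, hb, hab, hs⟩
    exact ⟨b, a, hb, ha, hab.symm, by rw [symmDiff_comm, hs, Finset.pair_comm]⟩
  loopless := by
    constructor
    rintro A ⟨a, b, ha, hb, hab, hs⟩
    rw [symmDiff_self] at hs
    have h : a ∈ ({a, b} : Finset V) := Finset.mem_insert_self a {b}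
    rw [← hs] at h
    simp at h

/-- The `k`-token signed graph: the edge obtained by moving a token along `ab`
carries the sign of `ab`. -/
def token (Γ : SignedGraph V) (k : ℕ) : SignedGraph {A : Finset V // A.card = k} where
  G := tokenAdj Γ.G k
  sign A B := ∏ a ∈ A.1 \ B.1, ∏ b ∈ B.1 \ A.1, Γ.sign a b
  sign_symm A B := by
    rw [Finset.prod_comm]
    exact Finset.prod_congr rfl fun b _ => Finset.prod_congr rfl fun a _ => Γ.sign_symm a b

/-- The signed adjacency matrix (over `ℝ`). -/
noncomputable def adjMatrix (Γ : SignedGraph V) [Fintype V] : Matrix V V ℝ :=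
  Matrix.of fun u v => if Γ.G.Adj u v then ((Γ.sign u v : ℤ) : ℝ) else 0

/-- The signed Laplacian matrix `L = D - A` (over `ℝ`). -/
noncomputable def lapMatrix (Γ : SignedGraph V) [Fintype V] : Matrix V V ℝ :=
  Matrix.diagonal (fun v => (Γ.G.degree v : ℝ)) - Γ.adjMatrix

/-- The quantity `ℓ_m(Γ)`. -/
noncomputable def ellm (Γ : SignedGraph V) [Fintype V] (m : ℕ) : ℝ :=
  (∑ r ∈ Finset.range (m + 1),
      ((Γ.G.adjMatrix ℝ ^ r).trace - (Γ.adjMatrix ^ r).trace)) /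
  (∑ r ∈ Finset.range (m + 1),
      ((Γ.G.adjMatrix ℝ ^ r).trace + |(Γ.adjMatrix ^ r).trace|))

/-- The unbalance level `ℓ(Γ) = max {ℓ_{n-1}(Γ), ℓ_n(Γ)}`. -/
noncomputable def unbalanceLevel (Γ : SignedGraph V) [Fintype V] : ℝ :=
  max (Γ.ellm (Fintype.card V - 1)) (Γ.ellm (Fintype.card V))

/-- The frustration index: the minimum number of negative edges whose deletion yields a
balanced signed graph. -/
noncomputable def frustrationIndex (Γ : SignedGraph V) : ℕ :=
  sInf {m : ℕ | ∃ F : Finset (Sym2 V), F.card = m ∧ ↑F ⊆ Γ.G.edgeSet ∧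
    (∀ e ∈ F, Γ.esign e = -1) ∧
    Balanced ⟨Γ.G.deleteEdges ↑F, Γ.sign, Γ.sign_symm⟩}

/-- The signed complement of a balanced signed graph, with respect to a switching function
`s` witnessing balance (`A_σ = S A S`): the signed graph on the complement graph with
adjacency matrix `S Ā S`, i.e. with sign `s u * s v` on each complement edge. -/
def scompl (Γ : SignedGraph V) (s : V → ℤˣ) : SignedGraph V where
  G := Γ.Gᶜ
  sign u v := s u * s v
  sign_symm u v := mul_comm _ _

/-- The real diagonal `±1` matrix associated with `s : V → ℤˣ`. -/
noncomputable def diagS [Fintype V] (s : V → ℤˣ) : Matrix V V ℝ :=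
  Matrix.diagonal fun v => ((s v : ℤ) : ℝ)

end SignedGraph

/-- The all-positive signed complete graph on `V`. -/
def allPos (V : Type*) : SignedGraph V := ⟨⊤, fun _ _ => 1, fun _ _ => rfl⟩

/-- The `(n; 1, k)`-binomial matrix. -/
noncomputable def binomB (V : Type*) [Fintype V] [DecidableEq V] (k : ℕ) :
    Matrix {A : Finset V // A.card = k} V ℝ :=
  Matrix.of fun A v => if v ∈ A.1 then 1 else 0

/-- The `(n; k₁, k₂)`-binomial matrix. -/
noncomputable def binomB2 (V : Type*) [Fintype V] [DecidableEq V] (k₁ k₂ : ℕ) :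
    Matrix {A : Finset V // A.card = k₂} {A : Finset V // A.card = k₁} ℝ :=
  Matrix.of fun A X => if X.1 ⊆ A.1 then 1 else 0

namespace SignedGraph

variable {V : Type*}

@[simp] lemma esign_mk (Γ : SignedGraph V) (a b : V) : Γ.esign s(a, b) = Γ.sign a b := rfl

@[simp] lemma walkSign_nil (Γ : SignedGraph V) (u : V) :
    Γ.walkSign (SimpleGraph.Walk.nil : Γ.G.Walk u u) = 1 := rfl

@[simp] lemma walkSign_cons (Γ : SignedGraph V) {u v w : V} (h : Γ.G.Adj u v)
    (p : Γ.G.Walk v w) :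
    Γ.walkSign (SimpleGraph.Walk.cons h p) = Γ.sign u v * Γ.walkSign p := by
  simp [walkSign]

@[simp] lemma walkSign_append (Γ : SignedGraph V) {u v w : V} (p : Γ.G.Walk u v)
    (q : Γ.G.Walk v w) :
    Γ.walkSign (p.append q) = Γ.walkSign p * Γ.walkSign q := by
  simp [walkSign, SimpleGraph.Walk.edges_append]

@[simp] lemma walkSign_reverse (Γ : SignedGraph V) {u v : V} (p : Γ.G.Walk u v) :
    Γ.walkSign p.reverse = Γ.walkSign p := by
  rw [walkSign, walkSign, SimpleGraph.Walk.edges_reverse, List.map_reverse,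
    List.prod_reverse]

@[simp] lemma walkSign_copy (Γ : SignedGraph V) {u v u' v' : V} (p : Γ.G.Walk u v)
    (hu : u = u') (hv : v = v') :
    Γ.walkSign (p.copy hu hv) = Γ.walkSign p := by
  subst hu; subst hv; rfl

lemma sq (x : ℤˣ) : x * x = 1 := Int.units_mul_self x

/-- In a path from `v` to `u`, if the edge `{u,v}` appears, the path has length 1. -/
lemma edge_end {G : SimpleGraph V} {u v : V} (q : G.Walk v u) (hq : q.IsPath)
    (he : s(u, v) ∈ q.edges) : q.length = 1 := by
  induction q with
  | nil => simp at he
  | @cons v w u h' q' ih =>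
    rw [SimpleGraph.Walk.edges_cons, List.mem_cons] at he
    rcases he with he | he
    · rw [Sym2.eq_iff] at he
      rcases he with ⟨h1, h2⟩ | ⟨h1, _⟩
      · subst h2; subst h1; exact absurd h' (G.loopless.irrefl _)
      · subst h1
        -- q' : G.Walk u u is a path, so it is nil
        have hnil : q' = SimpleGraph.Walk.nil := by
          cases q' with
          | nil => rfl
          | cons h'' q'' =>
            exfalso
            have hp' := hq.of_cons
            rw [SimpleGraph.Walk.isPath_def] at hp'
            simp only [SimpleGraph.Walk.support_cons, List.nodup_cons] at hp'
            exact hp'.1 q''.end_mem_support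
        subst hnil; simp
    · exfalso
      have hv : v ∈ q'.support := SimpleGraph.Walk.snd_mem_support_of_mem_edges q' he
      have := hq.2
      simp only [SimpleGraph.Walk.support_cons, List.nodup_cons] at this
      exact this.1 hv

/-- In a balanced signed graph, every closed walk has sign `1`. -/
lemma Balanced.closedWalkSign {Γ : SignedGraph V} (hb : Γ.Balanced) :
    ∀ {u : V} (p : Γ.G.Walk u u), Γ.walkSign p = 1 := by
  suffices H : ∀ (N : ℕ) {u : V} (p : Γ.G.Walk u u), p.length ≤ N → Γ.walkSign p = 1 by
    intro u p; exact H p.length p le_rfl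
  intro N
  induction N with
  | zero =>
    intro u p hp
    have : p = SimpleGraph.Walk.nil := SimpleGraph.Walk.nil_iff_eq_nil.mp (SimpleGraph.Walk.length_eq_zero_iff.mp
      (Nat.le_zero.mp hp))
    subst this; simp
  | succ N ih =>
    intro u p hlen
    by_cases hnd : p.support.tail.Nodup
    · cases p with
      | nil => simp
      | @cons _ v _ hadj q =>
        have hq : q.IsPath := by
          rw [SimpleGraph.Walk.isPath_def]
          simpa using hnd
        by_cases he : s(u, v) ∈ q.edges
        · -- length 2 closed walk
          have h1 : q.length = 1 := edge_end q hq he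
          cases q with
          | nil => simp at h1
          | cons h'' q'' =>
            cases q'' with
            | nil =>
              simp only [walkSign_cons, walkSign_nil, mul_one]
              rw [Γ.sign_symm u v]
              exact sq _
            | cons h3 q3 => simp [SimpleGraph.Walk.length_cons] at h1
        · have hc : (SimpleGraph.Walk.cons hadj q).IsCycle :=
            (SimpleGraph.Walk.cons_isCycle_iff q hadj).mpr ⟨hq, he⟩
          exact hb _ hc
    · -- find a repeated vertex in the tail, rotate and split
      obtain ⟨w, hw⟩ : ∃ w, 1 < p.support.tail.count w := by
        by_contra hcon
        push_neg at hcon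
        exact hnd (List.nodup_iff_count_le_one.mpr hcon)
      have hwmem : w ∈ p.support := by
        apply List.mem_of_mem_tail
        exact List.count_pos_iff.mp (by omega)
      set p' := p.rotate w hwmem with hp'
      have hsign : Γ.walkSign p' = Γ.walkSign p := by
        unfold walkSign
        exact ((p.rotate_edges w hwmem).map Γ.esign).perm.prod_eq
      have hlen' : p'.length = p.length := by
        have h1 := (p.rotate_edges w hwmem).perm.length_eq
        rw [← SimpleGraph.Walk.length_edges, ← SimpleGraph.Walk.length_edges p]; exact h1
      have hcount' : 1 < p'.support.tail.count w := by
        rw [(SimpleGraph.Walk.support_rotate p w hwmem).perm.count_eq]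
        exact hw
      -- p' : Walk w w
      clear_value p'
      cases p' with
      | nil => simp at hcount'
      | @cons _ x _ hxw r =>
        have hwr : w ∈ r.support := by
          simp only [SimpleGraph.Walk.support_cons, List.tail_cons] at hcount'
          exact List.count_pos_iff.mp (by omega)
        have hspec := r.take_spec hwr
        have hdropne : r.dropUntil w hwr ≠ SimpleGraph.Walk.nil := by
          intro hnil
          have := SimpleGraph.Walk.count_support_takeUntil_eq_one r hwr
          rw [← hspec, hnil, SimpleGraph.Walk.append_nil] at hcount'
          simp only [SimpleGraph.Walk.support_cons, List.tail_cons] at hcount'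
          omega
        have hdroplen : 1 ≤ (r.dropUntil w hwr).length := by
          rcases Nat.eq_zero_or_pos (r.dropUntil w hwr).length with h0 | h1
          · exact absurd (SimpleGraph.Walk.nil_iff_eq_nil.mp (SimpleGraph.Walk.length_eq_zero_iff.mp h0)) hdropne
          · exact h1
        have hlensum : 1 + (r.takeUntil w hwr).length + (r.dropUntil w hwr).length
            = p.length := by
          rw [← hlen']
          simp only [SimpleGraph.Walk.length_cons]
          have := congrArg SimpleGraph.Walk.length hspec
          rw [SimpleGraph.Walk.length_append] at this
          omega
        have e1 : Γ.walkSign (SimpleGraph.Walk.cons hxw (r.takeUntil w hwr)) = 1 := by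
          apply ih
          rw [SimpleGraph.Walk.length_cons]
          omega
        have e2 : Γ.walkSign (r.dropUntil w hwr) = 1 := by
          apply ih
          omega
        calc Γ.walkSign p = Γ.walkSign (SimpleGraph.Walk.cons hxw r) := hsign.symm
          _ = 1 := by
            conv_lhs => rw [← hspec]
            rw [show SimpleGraph.Walk.cons hxw ((r.takeUntil w hwr).append (r.dropUntil w hwr))
              = (SimpleGraph.Walk.cons hxw (r.takeUntil w hwr)).append (r.dropUntil w hwr) from
              rfl]
            rw [walkSign_append, e1, e2, mul_one]

end SignedGraph

namespace SignedGraph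

variable {V : Type*}

/-- Telescoping: if the signature is given by a potential on all edges, every walk's
sign telescopes. -/
lemma walkSign_eq_potential (Γ : SignedGraph V) (s : V → ℤˣ)
    (hs : ∀ u v, Γ.G.Adj u v → Γ.sign u v = s u * s v) :
    ∀ {u v : V} (p : Γ.G.Walk u v), Γ.walkSign p = s u * s v := by
  intro u v p
  induction p with
  | nil => rw [walkSign_nil, sq]
  | @cons a b c h q ih =>
    rw [walkSign_cons, ih, hs a b h, mul_assoc, ← mul_assoc (s b), sq, one_mul]

lemma balanced_of_potential (Γ : SignedGraph V) (s : V → ℤˣ)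
    (hs : ∀ u v, Γ.G.Adj u v → Γ.sign u v = s u * s v) : Γ.Balanced := by
  intro u p _
  rw [Γ.walkSign_eq_potential s hs p, sq]

/-- Harary: a balanced signed graph admits a potential. -/
lemma Balanced.exists_potential {Γ : SignedGraph V} (hb : Γ.Balanced) :
    ∃ s : V → ℤˣ, ∀ u v, Γ.G.Adj u v → Γ.sign u v = s u * s v := by
  classical
  have hreach : ∀ v : V, Γ.G.Reachable ((Γ.G.connectedComponentMk v).out) v := fun v =>
    SimpleGraph.ConnectedComponent.eq.mp (Quot.out_eq _)
  refine ⟨fun v => Γ.walkSign (hreach v).some, ?_⟩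
  intro u v h
  have hc : Γ.G.connectedComponentMk u = Γ.G.connectedComponentMk v :=
    SimpleGraph.ConnectedComponent.connectedComponentMk_eq_of_adj h
  set r := (Γ.G.connectedComponentMk u).out with hr
  have hrv : (Γ.G.connectedComponentMk v).out = r := by rw [hr, hc]
  set pu := (hreach u).some with hpu
  set pv := (hreach v).some with hpv
  -- closed walk at r : pu ++ (cons h pv'.reverse)
  have key : Γ.walkSign (pu.append (SimpleGraph.Walk.cons h
      ((pv.copy hrv rfl).reverse))) = 1 := hb.closedWalkSign _
  rw [walkSign_append, walkSign_cons, walkSign_reverse, walkSign_copy] at key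
  -- key : walkSign pu * (sign u v * walkSign pv) = 1
  have h2 : Γ.sign u v = Γ.sign u v * (Γ.walkSign pu * (Γ.sign u v * Γ.walkSign pv)) := by
    rw [key, mul_one]
  rw [h2, mul_left_comm (Γ.walkSign pu), ← mul_assoc, sq, one_mul]

end SignedGraph

namespace SignedGraph

variable {V : Type*} [DecidableEq V]

lemma symmDiff_insert_insert {S : Finset V} {a b : V} (ha : a ∉ S) (hb : b ∉ S)
    (hab : a ≠ b) : symmDiff (insert a S) (insert b S) = ({a, b} : Finset V) := by
  have hxa : ∀ x : V, x = a → x ∉ S := fun x h => h ▸ ha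
  have hxb : ∀ x : V, x = b → x ∉ S := fun x h => h ▸ hb
  ext x
  simp only [Finset.mem_symmDiff, Finset.mem_insert, Finset.mem_singleton]
  constructor
  · rintro (⟨h1 | h1, h2⟩ | ⟨h1 | h1, h2⟩)
    · exact Or.inl h1
    · exact absurd (Or.inr h1) h2
    · exact Or.inr h1
    · exact absurd (Or.inr h1) h2
  · rintro (rfl | rfl)
    · exact Or.inl ⟨Or.inl rfl, by rintro (h | h); exacts [hab h, ha h]⟩
    · exact Or.inr ⟨Or.inl rfl, by rintro (h | h); exacts [hab h.symm, hb h]⟩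

lemma pair_eq_sym2 {a b c d : V} (hab : a ≠ b) (h : ({a, b} : Finset V) = {c, d}) :
    s(a, b) = s(c, d) := by
  have hac : a = c ∨ a = d := by
    have : a ∈ ({c, d} : Finset V) := h ▸ Finset.mem_insert_self a {b}
    simpa using this
  have hbc : b = c ∨ b = d := by
    have : b ∈ ({c, d} : Finset V) := h ▸ (Finset.mem_insert_of_mem (Finset.mem_singleton_self b))
    simpa using this
  rcases hac with rfl | rfl
  · rcases hbc with rfl | rfl
    · exact absurd rfl hab
    · rfl
  · rcases hbc with rfl | rfl
    · exact Sym2.eq_swap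
    · exact absurd rfl hab

variable {k : ℕ}

/-- Structure of an edge of the token graph. -/
lemma tokenAdj_struct {G : SimpleGraph V} {A B : {A : Finset V // A.card = k}}
    (h : (tokenAdj G k).Adj A B) :
    ∃ a b, G.Adj a b ∧ A.1 \ B.1 = {a} ∧ B.1 \ A.1 = {b} ∧ a ∈ A.1 ∧ b ∈ B.1 ∧
      a ∉ B.1 ∧ b ∉ A.1 ∧ symmDiff A.1 B.1 = {a, b} := by
  obtain ⟨a, b, ha, hb, hab, hs⟩ := h
  have hmem : ∀ x : V, x ∈ symmDiff A.1 B.1 ↔ (x = a ∨ x = b) := by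
    intro x; rw [hs]; simp
  have haB : a ∉ B.1 := by
    have := (hmem a).mpr (Or.inl rfl)
    rw [Finset.mem_symmDiff] at this
    rcases this with ⟨_, h2⟩ | ⟨_, h2⟩
    · exact h2
    · exact absurd ha h2
  have hbA : b ∉ A.1 := by
    have := (hmem b).mpr (Or.inr rfl)
    rw [Finset.mem_symmDiff] at this
    rcases this with ⟨_, h2⟩ | ⟨_, h2⟩
    · exact absurd hb h2
    · exact h2
  refine ⟨a, b, hab, ?_, ?_, ha, hb, haB, hbA, hs⟩
  · ext x
    simp only [Finset.mem_sdiff, Finset.mem_singleton]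
    constructor
    · rintro ⟨h1, h2⟩
      have := (hmem x).mp (Finset.mem_symmDiff.mpr (Or.inl ⟨h1, h2⟩))
      rcases this with rfl | rfl
      · rfl
      · exact absurd h1 hbA
    · rintro rfl; exact ⟨ha, haB⟩
  · ext x
    simp only [Finset.mem_sdiff, Finset.mem_singleton]
    constructor
    · rintro ⟨h1, h2⟩
      have := (hmem x).mp (Finset.mem_symmDiff.mpr (Or.inr ⟨h1, h2⟩))
      rcases this with rfl | rfl
      · exact absurd h1 haB
      · rfl
    · rintro rfl; exact ⟨hb, hbA⟩

lemma token_sign_eq {Γ : SignedGraph V} {A B : {A : Finset V // A.card = k}} {a b : V}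
    (hA : A.1 \ B.1 = {a}) (hB : B.1 \ A.1 = {b}) :
    (Γ.token k).sign A B = Γ.sign a b := by
  show (∏ x ∈ A.1 \ B.1, ∏ y ∈ B.1 \ A.1, Γ.sign x y) = Γ.sign a b
  rw [hA, hB, Finset.prod_singleton, Finset.prod_singleton]

/-- The set of endpoints-difference of an unordered pair of token vertices. -/
def und2 (k : ℕ) : Sym2 {A : Finset V // A.card = k} → Finset V :=
  Sym2.lift ⟨fun A B => symmDiff A.1 B.1, fun A B => symmDiff_comm A.1 B.1⟩

/-- The pair Finset of an unordered pair. -/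
def eF : Sym2 V → Finset V :=
  Sym2.lift ⟨fun a b => {a, b}, fun a b => Finset.pair_comm a b⟩

@[simp] lemma und2_mk (A B : {A : Finset V // A.card = k}) :
    und2 k s(A, B) = symmDiff A.1 B.1 := rfl

@[simp] lemma eF_mk (a b : V) : eF s(a, b) = ({a, b} : Finset V) := rfl

end SignedGraph

namespace SignedGraph

variable {V : Type*} [DecidableEq V] [Fintype V] {k : ℕ}

lemma card_tokenEdges (G : SimpleGraph V) {n : ℕ} (hn : Fintype.card V = n)
    (hk1 : 1 ≤ k) : (Set.toFinite (tokenAdj G k).edgeSet).toFinset.card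
      = (n - 2).choose (k - 1) * (Set.toFinite G.edgeSet).toFinset.card := by
  classical
  set TE := (Set.toFinite (tokenAdj G k).edgeSet).toFinset with hTE
  set EG := (Set.toFinite G.edgeSet).toFinset with hEG
  have hcover : TE = EG.biUnion (fun e => TE.filter (fun E => und2 k E = eF e)) := by
    ext E
    simp only [Finset.mem_biUnion, Finset.mem_filter]
    constructor
    · intro hE
      have hE' : E ∈ (tokenAdj G k).edgeSet := (Set.Finite.mem_toFinset _).mp hE
      revert hE hE'
      refine Sym2.ind ?_ E
      intro A B hE hE'
      rw [SimpleGraph.mem_edgeSet] at hE'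
      obtain ⟨a, b, hab, hA, hB, _, _, _, _, hs⟩ := tokenAdj_struct hE'
      exact ⟨s(a, b), (Set.Finite.mem_toFinset _).mpr ((SimpleGraph.mem_edgeSet _).mpr hab),
        hE, by rw [und2_mk, eF_mk, hs]⟩
    · rintro ⟨e, _, hE, _⟩; exact hE
  have hdisj : ∀ x ∈ EG, ∀ y ∈ EG, x ≠ y →
      Disjoint (TE.filter (fun E => und2 k E = eF x)) (TE.filter (fun E => und2 k E = eF y)) := by
    intro x hx y hy hxy
    rw [Finset.disjoint_left]
    intro E hEx hEy
    rw [Finset.mem_filter] at hEx hEy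
    apply hxy
    have hEF : eF x = eF y := by rw [← hEx.2, hEy.2]
    have hx' : ¬x.IsDiag :=
      SimpleGraph.not_isDiag_of_mem_edgeSet G ((Set.Finite.mem_toFinset _).mp hx)
    revert hEF hx'
    refine Sym2.ind (fun a b => ?_) x
    refine Sym2.ind (fun c d => ?_) y
    intro hEF hdiag
    simp only [eF_mk] at hEF
    exact pair_eq_sym2 (by simpa using hdiag) hEF
  have hfib : ∀ e ∈ EG, (TE.filter (fun E => und2 k E = eF e)).card
      = (n - 2).choose (k - 1) := by
    intro e
    refine Sym2.ind ?_ e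
    intro a b he
    have hadj : G.Adj a b := (SimpleGraph.mem_edgeSet _).mp ((Set.Finite.mem_toFinset _).mp he)
    have hab : a ≠ b := hadj.ne
    have hcard2 : (Finset.univ \ ({a, b} : Finset V)).card = n - 2 := by
      rw [Finset.card_sdiff_of_subset (Finset.subset_univ _), Finset.card_univ, hn]
      congr 1
      rw [Finset.card_insert_of_notMem (by simpa using hab), Finset.card_singleton]
    have key : ∀ S, S ∈ (Finset.univ \ ({a, b} : Finset V)).powersetCard (k - 1) →
        (insert a S).card = k ∧ (insert b S).card = k ∧ a ∉ S ∧ b ∉ S := by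
      intro S hS
      obtain ⟨hsub, hcS⟩ := Finset.mem_powersetCard.mp hS
      have haS : a ∉ S := fun h => by simpa using hsub h
      have hbS : b ∉ S := fun h => by have := hsub h; simp at this
      refine ⟨?_, ?_, haS, hbS⟩
      · rw [Finset.card_insert_of_notMem haS, hcS]; omega
      · rw [Finset.card_insert_of_notMem hbS, hcS]; omega
    have hbij := Finset.card_bij
      (s := (Finset.univ \ ({a, b} : Finset V)).powersetCard (k - 1))
      (t := TE.filter (fun E => und2 k E = eF s(a, b)))
      (fun S hS => s((⟨insert a S, (key S hS).1⟩ : {A : Finset V // A.card = k}),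
        (⟨insert b S, (key S hS).2.1⟩ : {A : Finset V // A.card = k})))
      (by
        intro S hS
        obtain ⟨h1, h2, haS, hbS⟩ := key S hS
        rw [Finset.mem_filter]
        constructor
        · rw [Set.Finite.mem_toFinset, SimpleGraph.mem_edgeSet]
          exact ⟨a, b, Finset.mem_insert_self a S, Finset.mem_insert_self b S, hadj,
            symmDiff_insert_insert haS hbS hab⟩
        · rw [und2_mk, eF_mk]
          exact symmDiff_insert_insert haS hbS hab)
      (by
        intro S1 hS1 S2 hS2 heq
        obtain ⟨_, _, haS1, hbS1⟩ := key S1 hS1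
        obtain ⟨_, _, haS2, hbS2⟩ := key S2 hS2
        rw [Sym2.eq_iff] at heq
        rcases heq with ⟨h1, _⟩ | ⟨h1, _⟩
        · have h1' : insert a S1 = insert a S2 := congrArg Subtype.val h1
          calc S1 = (insert a S1).erase a := (Finset.erase_insert haS1).symm
            _ = (insert a S2).erase a := by rw [h1']
            _ = S2 := Finset.erase_insert haS2
        · have h1' : insert a S1 = insert b S2 := congrArg Subtype.val h1
          exfalso
          have : a ∈ insert b S2 := h1' ▸ Finset.mem_insert_self a S1
          rcases Finset.mem_insert.mp this with h | h
          · exact hab h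
          · exact haS2 h)
      (by
        intro E hE
        rw [Finset.mem_filter] at hE
        obtain ⟨hE1, hE2⟩ := hE
        revert hE1 hE2
        refine Sym2.ind ?_ E
        intro A B hE1 hE2
        have hAdj : (tokenAdj G k).Adj A B :=
          (SimpleGraph.mem_edgeSet _).mp ((Set.Finite.mem_toFinset _).mp hE1)
        obtain ⟨a', b', hadj', hA, hB, haA, hbB, haB, hbA, hs⟩ := tokenAdj_struct hAdj
        rw [und2_mk] at hE2
        rw [eF_mk] at hE2
        have hpair : ({a', b'} : Finset V) = {a, b} := hs.symm.trans hE2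
        have hsym : s(a', b') = s(a, b) := pair_eq_sym2 hadj'.ne hpair
        set S := A.1 ∩ B.1 with hSdef
        have ha'S : a' ∉ S := fun h => haB (Finset.mem_inter.mp h).2
        have hb'S : b' ∉ S := fun h => hbA (Finset.mem_inter.mp h).1
        have hAeq : A.1 = insert a' S := by
          rw [Finset.insert_eq, ← hA, hSdef, Finset.sdiff_union_inter]
        have hBeq : B.1 = insert b' S := by
          rw [Finset.insert_eq, ← hB, hSdef, Finset.inter_comm, Finset.sdiff_union_inter]
        have hcS : S.card = k - 1 := by
          have := A.2
          rw [hAeq, Finset.card_insert_of_notMem ha'S] at this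
          omega
        have hSsub : S ⊆ Finset.univ \ ({a, b} : Finset V) := by
          intro x hx
          rw [Finset.mem_sdiff]
          refine ⟨Finset.mem_univ x, ?_⟩
          intro hmem
          have hx2 : x ∈ ({a', b'} : Finset V) := hpair ▸ hmem
          rcases Finset.mem_insert.mp hx2 with rfl | hx2
          · exact ha'S hx
          · rw [Finset.mem_singleton] at hx2
            subst hx2
            exact hb'S hx
        have hSmem : S ∈ (Finset.univ \ ({a, b} : Finset V)).powersetCard (k - 1) :=
          Finset.mem_powersetCard.mpr ⟨hSsub, hcS⟩
        refine ⟨S, hSmem, ?_⟩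
        rw [Sym2.eq_iff] at hsym
        rcases hsym with ⟨h1, h2⟩ | ⟨h1, h2⟩
        · subst h1; subst h2
          rw [Sym2.eq_iff]
          left
          exact ⟨Subtype.ext hAeq.symm, Subtype.ext hBeq.symm⟩
        · subst h1; subst h2
          rw [Sym2.eq_iff]
          right
          exact ⟨Subtype.ext hBeq.symm, Subtype.ext hAeq.symm⟩)
    rw [← hbij, Finset.card_powersetCard, hcard2]
  rw [hcover, Finset.card_biUnion hdisj]
  rw [Finset.sum_congr rfl hfib, Finset.sum_const, smul_eq_mul, mul_comm]

end SignedGraph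

namespace SignedGraph

variable {V : Type*} [DecidableEq V] {k : ℕ}

lemma tokenAdj_mono {G H : SimpleGraph V} (h : G ≤ H) : tokenAdj G k ≤ tokenAdj H k := by
  intro A B hAB
  obtain ⟨a, b, ha, hb, hab, hs⟩ := hAB
  exact ⟨a, b, ha, hb, h hab, hs⟩

lemma deleteEdges_tokenAdj (G : SimpleGraph V) (F : Set (Sym2 V)) :
    (tokenAdj G k).deleteEdges
        ((tokenAdj G k).edgeSet \ (tokenAdj (G.deleteEdges F) k).edgeSet)
      = tokenAdj (G.deleteEdges F) k := by
  apply SimpleGraph.edgeSet_inj.mp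
  rw [SimpleGraph.edgeSet_deleteEdges]
  exact Set.diff_diff_cancel_left
    (SimpleGraph.edgeSet_mono (tokenAdj_mono (SimpleGraph.deleteEdges_le F)))

/-- The set defining the frustration index is nonempty. -/
lemma frustSet_nonempty (Γ : SignedGraph V) [Fintype V] :
    {m : ℕ | ∃ F : Finset (Sym2 V), F.card = m ∧ ↑F ⊆ Γ.G.edgeSet ∧
      (∀ e ∈ F, Γ.esign e = -1) ∧
      Balanced ⟨Γ.G.deleteEdges ↑F, Γ.sign, Γ.sign_symm⟩}.Nonempty := by
  classical
  set F0 := (Set.toFinite Γ.G.edgeSet).toFinset.filter (fun e => Γ.esign e = -1) with hF0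
  refine ⟨F0.card, F0, rfl, ?_, ?_, ?_⟩
  · intro e he
    rw [hF0] at he
    simp only [Finset.coe_filter, Set.mem_setOf_eq] at he
    exact (Set.Finite.mem_toFinset _).mp he.1
  · intro e he
    exact (Finset.mem_filter.mp he).2
  · intro u p _
    show (p.edges.map Γ.esign).prod = 1
    apply List.prod_eq_one
    intro x hx
    rw [List.mem_map] at hx
    obtain ⟨e, he, rfl⟩ := hx
    have hmem : e ∈ (Γ.G.deleteEdges ↑F0).edgeSet := p.edges_subset_edgeSet he
    rw [SimpleGraph.edgeSet_deleteEdges, Set.mem_diff] at hmem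
    rcases Int.units_eq_one_or (Γ.esign e) with h1 | h1
    · exact h1
    · exfalso
      apply hmem.2
      rw [Finset.mem_coe, hF0, Finset.mem_filter]
      exact ⟨(Set.Finite.mem_toFinset _).mpr hmem.1, h1⟩

/-- Splitting a walk at a given length. -/
lemma walk_split {G : SimpleGraph V} :
    ∀ {x y : V} (q : G.Walk x y) (i : ℕ), i ≤ q.length →
      ∃ (w : V) (q₁ : G.Walk x w) (q₂ : G.Walk w y),
        q = q₁.append q₂ ∧ q₁.length = i := by
  intro x y q i
  induction i generalizing x q with
  | zero =>
    intro _
    exact ⟨x, SimpleGraph.Walk.nil, q, rfl, rfl⟩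
  | succ i ih =>
    intro hi
    cases q with
    | nil => simp at hi
    | @cons _ v _ h q' =>
      rw [SimpleGraph.Walk.length_cons] at hi
      obtain ⟨w, q₁, q₂, hq, hl⟩ := ih q' (by omega)
      exact ⟨w, SimpleGraph.Walk.cons h q₁, q₂, by rw [hq]; rfl,
        by rw [SimpleGraph.Walk.length_cons, hl]⟩

end SignedGraph

namespace SignedGraph

variable {V : Type*} [DecidableEq V] {k : ℕ}

section TravelShift

variable (Δ : SignedGraph V) (S : Finset V → ℤˣ)

/-- One token travels along a walk, the other `k-1` tokens stay on `B`. -/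
lemma travel
    (hstep : ∀ a b (T : Finset V), Δ.G.Adj a b → a ∉ T → b ∉ T → T.card = k - 1 →
      Δ.sign a b = S (insert a T) * S (insert b T)) :
    ∀ {x y : V} (q : Δ.G.Walk x y) (B : Finset V), B.card = k - 1 →
      (∀ z ∈ q.support, z ∉ B) →
      (q.edges.map Δ.esign).prod = S (insert x B) * S (insert y B) := by
  intro x y q
  induction q with
  | nil =>
    intro B _ _
    simp [(sq _).symm]
  | @cons a b c h q' ih =>
    intro B hB hd
    have haB : a ∉ B := hd a (by simp)
    have hbB : b ∉ B := hd b (by simp [SimpleGraph.Walk.start_mem_support])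
    have hstep1 : Δ.sign a b = S (insert a B) * S (insert b B) := hstep a b B h haB hbB hB
    have ih' := ih B hB (fun z hz => hd z (by simp [hz]))
    rw [SimpleGraph.Walk.edges_cons, List.map_cons, List.prod_cons, esign_mk, hstep1, ih',
      mul_assoc, ← mul_assoc (S (insert b B)), sq, one_mul]

/-- A block of tokens occupying all but the last vertex of a path shifts one step forward. -/
lemma shift
    (hstep : ∀ a b (T : Finset V), Δ.G.Adj a b → a ∉ T → b ∉ T → T.card = k - 1 →
      Δ.sign a b = S (insert a T) * S (insert b T)) :
    ∀ {x y : V} (q : Δ.G.Walk x y) (B : Finset V), q.IsPath → B.card + q.length = k →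
      (∀ z ∈ q.support, z ∉ B) →
      (q.edges.map Δ.esign).prod
        = S (B ∪ q.support.dropLast.toFinset) * S (B ∪ q.support.tail.toFinset) := by
  intro x y q
  induction q with
  | nil =>
    intro B _ _ _
    simp [(sq _).symm]
  | @cons a b c h q' ih =>
    intro B hp hB hd
    have haB : a ∉ B := hd a (by simp)
    have haq' : a ∉ q'.support := by
      have := hp.2
      simp only [SimpleGraph.Walk.support_cons, List.nodup_cons] at this
      exact this.1
    have hndq' : q'.support.Nodup := by
      have := hp.2
      simp only [SimpleGraph.Walk.support_cons, List.nodup_cons] at this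
      exact this.2
    have hbtail : b ∉ q'.support.tail := by
      intro hmem
      have := SimpleGraph.Walk.support_eq_cons q'
      rw [this, List.nodup_cons] at hndq'
      exact hndq'.1 hmem
    have hndtail : q'.support.tail.Nodup := by
      have := SimpleGraph.Walk.support_eq_cons q'
      rw [this, List.nodup_cons] at hndq'
      exact hndq'.2
    have hdisjB : Disjoint B q'.support.tail.toFinset := by
      rw [Finset.disjoint_right]
      intro z hz
      exact fun hzB => hd z (by
        simp only [SimpleGraph.Walk.support_cons, List.mem_cons]
        exact Or.inr (List.mem_of_mem_tail (List.mem_toFinset.mp hz))) hzB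
    have hcardT : (B ∪ q'.support.tail.toFinset).card = k - 1 := by
      rw [Finset.card_union_of_disjoint hdisjB, List.toFinset_card_of_nodup hndtail]
      have h1 : q'.support.tail.length = q'.length := by
        have := SimpleGraph.Walk.length_support q'
        have h2 := SimpleGraph.Walk.support_eq_cons q'
        rw [h2] at this
        simpa using this
      rw [h1]
      have := hB
      rw [SimpleGraph.Walk.length_cons] at this
      omega
    have haT : a ∉ B ∪ q'.support.tail.toFinset := by
      rw [Finset.mem_union]
      rintro (h1 | h1)
      · exact haB h1
      · exact haq' (List.mem_of_mem_tail (List.mem_toFinset.mp h1))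
    have hbT : b ∉ B ∪ q'.support.tail.toFinset := by
      rw [Finset.mem_union]
      rintro (h1 | h1)
      · exact hd b (by simp [SimpleGraph.Walk.start_mem_support]) h1
      · exact hbtail (List.mem_toFinset.mp h1)
    have hstep1 := hstep a b _ h haT hbT hcardT
    have ih' := ih (insert a B) hp.of_cons
      (by rw [Finset.card_insert_of_notMem haB]
          rw [SimpleGraph.Walk.length_cons] at hB
          omega)
      (by intro z hz
          rw [Finset.mem_insert]
          rintro (rfl | h1)
          · exact haq' hz
          · exact hd z (by simp [hz]) h1)
    -- identifications
    have e1 : insert a (B ∪ q'.support.tail.toFinset)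
        = insert a B ∪ q'.support.tail.toFinset := by
      rw [Finset.insert_union]
    have e2 : insert b (B ∪ q'.support.tail.toFinset)
        = B ∪ (SimpleGraph.Walk.cons h q').support.tail.toFinset := by
      rw [SimpleGraph.Walk.support_cons, List.tail_cons,
        SimpleGraph.Walk.support_eq_cons q', List.toFinset_cons, Finset.union_insert]
      simp
    have e3 : insert a B ∪ q'.support.dropLast.toFinset
        = B ∪ (SimpleGraph.Walk.cons h q').support.dropLast.toFinset := by
      rw [SimpleGraph.Walk.support_cons,
        List.dropLast_cons_of_ne_nil (SimpleGraph.Walk.support_ne_nil q'),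
        List.toFinset_cons, Finset.union_insert, Finset.insert_union]
    rw [SimpleGraph.Walk.edges_cons, List.map_cons, List.prod_cons, esign_mk, hstep1, ih',
      e1, e2, e3]
    set A1 := S (insert a B ∪ q'.support.tail.toFinset)
    set A2 := S (B ∪ (SimpleGraph.Walk.cons h q').support.tail.toFinset)
    set A3 := S (B ∪ (SimpleGraph.Walk.cons h q').support.dropLast.toFinset)
    set A4 := S (insert a B ∪ q'.support.tail.toFinset)
    -- goal : A1 * A2 * (A3 * A4) = A3 * A2  with A4 = A1
    calc A1 * A2 * (A3 * A1) = (A1 * A1) * (A2 * A3) := by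
          simp only [mul_comm, mul_assoc, mul_left_comm]
      _ = A3 * A2 := by rw [sq, one_mul, mul_comm]

end TravelShift

end SignedGraph

namespace SignedGraph

variable {V : Type*} [DecidableEq V] {k : ℕ}

lemma balanced_of_token_potential [Fintype V] {n : ℕ} (Δ : SignedGraph V)
    (hn : Fintype.card V = n) (hk1 : 1 ≤ k) (hk2 : k ≤ n - 1)
    (S : Finset V → ℤˣ)
    (hstep : ∀ a b (T : Finset V), Δ.G.Adj a b → a ∉ T → b ∉ T → T.card = k - 1 →
      Δ.sign a b = S (insert a T) * S (insert b T)) :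
    Δ.Balanced := by
  have hn2 : 2 ≤ n := by omega
  intro u p hp
  have hm3 : 3 ≤ p.length := hp.three_le_length
  cases p with
  | nil => simp at hm3
  | @cons _ v _ h q =>
    obtain ⟨hq, hce⟩ := (SimpleGraph.Walk.cons_isCycle_iff q h).mp hp
    set m := q.length + 1 with hm
    have hmn : m ≤ n := by
      have h1 : q.support.length ≤ Fintype.card V := hq.support_nodup.length_le_card
      rw [SimpleGraph.Walk.length_support, hn] at h1
      omega
    have hm3' : 3 ≤ m := by
      rw [SimpleGraph.Walk.length_cons] at hm3; omega
    set P := q.reverse with hP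
    have hPpath : P.IsPath := hq.reverse
    have hPlen : P.length = m - 1 := by
      rw [hP, SimpleGraph.Walk.length_reverse]; omega
    set j := max 1 (k + m - n) with hj
    have hj1 : 1 ≤ j := le_max_left _ _
    have hjm : j ≤ m - 1 := by omega
    have hjk : j ≤ k := by omega
    have hkj : k - j ≤ n - m := by omega
    obtain ⟨w, P1, P2, hsplit, hP1len⟩ := walk_split P (j - 1) (by omega)
    have hPnd : P.support.Nodup := hPpath.support_nodup
    have hPsupp : P.support = P1.support ++ P2.support.tail := by
      rw [hsplit]; exact SimpleGraph.Walk.support_append P1 P2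
    have hndall := hPsupp ▸ hPnd
    rw [List.nodup_append] at hndall
    obtain ⟨hnd1, hndt2, hdisj⟩ := hndall
    have hP2len : P2.length = m - j := by
      have := congrArg SimpleGraph.Walk.length hsplit
      rw [SimpleGraph.Walk.length_append] at this
      omega
    have hzmem : v ∈ P2.support.tail := by
      cases P2 with
      | nil => exfalso; rw [SimpleGraph.Walk.length_nil] at hP2len; omega
      | cons h2 r2 =>
        rw [SimpleGraph.Walk.support_cons, List.tail_cons]
        exact SimpleGraph.Walk.end_mem_support r2
    have hvL1 : v ∉ P1.support := fun hmem => hdisj v hmem v hzmem rfl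
    have hL1len : P1.support.length = j := by
      rw [SimpleGraph.Walk.length_support, hP1len]; omega
    have hL1cons : P1.support = u :: P1.support.tail := SimpleGraph.Walk.support_eq_cons P1
    have hL1rev : P1.support.reverse = w :: P1.support.reverse.tail := by
      rw [← SimpleGraph.Walk.support_reverse]
      exact SimpleGraph.Walk.support_eq_cons P1.reverse
    have hL1last : P1.support = P1.support.reverse.tail.reverse ++ [w] := by
      conv_lhs => rw [← List.reverse_reverse P1.support, hL1rev]
      rw [List.reverse_cons]
    have hL1drop : P1.support.dropLast = P1.support.reverse.tail.reverse := by
      conv_lhs => rw [hL1last]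
      rw [List.dropLast_concat]
    have hL1last' : P1.support = P1.support.dropLast ++ [w] := by
      rw [hL1drop]; exact hL1last
    -- choose the off-cycle tokens
    have hCVcard : P.support.toFinset.card = m := by
      rw [List.toFinset_card_of_nodup hPnd, SimpleGraph.Walk.length_support]
      omega
    obtain ⟨B, hBsub, hBcard⟩ := Finset.exists_subset_card_eq
      (s := Finset.univ \ P.support.toFinset) (n := k - j)
      (by rw [Finset.card_sdiff_of_subset (Finset.subset_univ _), Finset.card_univ, hn, hCVcard]; omega)
    have hBdis : ∀ x ∈ P.support, x ∉ B := by
      intro x hx hxB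
      have := hBsub hxB
      rw [Finset.mem_sdiff] at this
      exact this.2 (List.mem_toFinset.mpr hx)
    have hsubL1 : ∀ x ∈ P1.support, x ∈ P.support := by
      intro x hx; rw [hPsupp]; exact List.mem_append_left _ hx
    have hsubL2 : ∀ x ∈ P2.support, x ∈ P.support := by
      intro x hx
      rw [SimpleGraph.Walk.support_eq_cons P2] at hx
      rcases List.mem_cons.mp hx with rfl | hx
      · exact hsubL1 _ (SimpleGraph.Walk.end_mem_support P1)
      · rw [hPsupp]; exact List.mem_append_right _ hx
    have hdlsub : ∀ x ∈ P1.support.dropLast, x ∈ P1.support :=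
      fun x hx => (List.dropLast_sublist _).subset hx
    have htlsub : ∀ x ∈ P1.support.tail, x ∈ P1.support :=
      fun x hx => (List.tail_sublist _).subset hx
    have hnddl : P1.support.dropLast.Nodup := (List.dropLast_sublist _).nodup hnd1
    have hndtl : P1.support.tail.Nodup := (List.tail_sublist _).nodup hnd1
    have hdllen : P1.support.dropLast.length = j - 1 := by
      rw [List.length_dropLast, hL1len]
    have htllen : P1.support.tail.length = j - 1 := by
      rw [List.length_tail, hL1len]
    have hwdl : w ∉ P1.support.dropLast := by
      intro hmem
      have h2 := hL1last' ▸ hnd1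
      rw [List.nodup_append] at h2
      exact h2.2.2 w hmem w (List.mem_singleton_self w) rfl
    have hutl : u ∉ P1.support.tail := by
      have h2 := hL1cons ▸ hnd1
      rw [List.nodup_cons] at h2
      exact h2.1
    have huP : u ∈ P.support := SimpleGraph.Walk.start_mem_support P
    have hvP : v ∈ P.support := SimpleGraph.Walk.end_mem_support P
    have hwP1 : w ∈ P1.support := SimpleGraph.Walk.end_mem_support P1
    -- disjointness of B from pieces
    have hBdl : Disjoint B P1.support.dropLast.toFinset := by
      rw [Finset.disjoint_right]
      intro x hx
      exact fun hxB => hBdis x (hsubL1 x (hdlsub x (List.mem_toFinset.mp hx))) hxB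
    have hBtl : Disjoint B P1.support.tail.toFinset := by
      rw [Finset.disjoint_right]
      intro x hx
      exact fun hxB => hBdis x (hsubL1 x (htlsub x (List.mem_toFinset.mp hx))) hxB
    -- op1 : travel P2 with B ∪ dropLast
    have hB1card : (B ∪ P1.support.dropLast.toFinset).card = k - 1 := by
      rw [Finset.card_union_of_disjoint hBdl, List.toFinset_card_of_nodup hnddl,
        hBcard, hdllen]
      omega
    have op1 := travel Δ S hstep P2 (B ∪ P1.support.dropLast.toFinset) hB1card
      (by
        intro z hz
        rw [Finset.mem_union]
        rintro (h1 | h1)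
        · exact hBdis z (hsubL2 z hz) h1
        · have hzL1 : z ∈ P1.support := hdlsub z (List.mem_toFinset.mp h1)
          rw [SimpleGraph.Walk.support_eq_cons P2] at hz
          rcases List.mem_cons.mp hz with rfl | hz
          · exact hwdl (List.mem_toFinset.mp h1)
          · exact hdisj z hzL1 z hz rfl)
    -- op2 : shift P1 with insert v B
    have hvB : v ∉ B := hBdis v hvP
    have op2 := shift Δ S hstep P1 (insert v B)
      (by rw [SimpleGraph.Walk.isPath_def]; exact hnd1)
      (by rw [Finset.card_insert_of_notMem hvB, hBcard, hP1len]; omega)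
      (by
        intro z hz
        rw [Finset.mem_insert]
        rintro (rfl | h1)
        · exact hvL1 hz
        · exact hBdis z (hsubL1 z hz) h1)
    -- op3 : the last edge
    have hB3card : (B ∪ P1.support.tail.toFinset).card = k - 1 := by
      rw [Finset.card_union_of_disjoint hBtl, List.toFinset_card_of_nodup hndtl,
        hBcard, htllen]
      omega
    have op3 := hstep v u (B ∪ P1.support.tail.toFinset) h.symm
      (by
        rw [Finset.mem_union]
        rintro (h1 | h1)
        · exact hvB h1
        · exact hvL1 (htlsub v (List.mem_toFinset.mp h1)))
      (by
        rw [Finset.mem_union]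
        rintro (h1 | h1)
        · exact hBdis u huP h1
        · exact hutl (List.mem_toFinset.mp h1))
      hB3card
    -- identifications of configurations
    have i1 : insert w (B ∪ P1.support.dropLast.toFinset) = B ∪ P1.support.toFinset := by
      conv_rhs => rw [hL1last']
      ext x
      simp only [Finset.mem_insert, Finset.mem_union, List.mem_toFinset, List.toFinset_append,
        List.mem_append, List.toFinset_cons, List.toFinset_nil, List.mem_singleton]
      tauto
    have i2 : insert v (B ∪ P1.support.dropLast.toFinset)
        = insert v B ∪ P1.support.dropLast.toFinset := by
      rw [Finset.insert_union]
    have i3 : insert v B ∪ P1.support.tail.toFinset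
        = insert v (B ∪ P1.support.tail.toFinset) := by
      rw [Finset.insert_union]
    have i4 : insert u (B ∪ P1.support.tail.toFinset) = B ∪ P1.support.toFinset := by
      conv_rhs => rw [hL1cons]
      ext x
      simp only [Finset.mem_insert, Finset.mem_union, List.mem_toFinset, List.toFinset_cons,
        List.mem_cons]
      tauto
    -- assemble
    have hws : Δ.walkSign (SimpleGraph.Walk.cons h q)
        = Δ.walkSign (P.append (SimpleGraph.Walk.cons h.symm SimpleGraph.Walk.nil)) := by
      rw [← walkSign_reverse Δ (SimpleGraph.Walk.cons h q), SimpleGraph.Walk.reverse_cons]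
    rw [hws, walkSign_append, hsplit, walkSign_append, walkSign_cons, walkSign_nil]
    have hwP1e : Δ.walkSign P1 = (P1.edges.map Δ.esign).prod := rfl
    have hwP2e : Δ.walkSign P2 = (P2.edges.map Δ.esign).prod := rfl
    rw [hwP1e, hwP2e, op1, op2, op3, i1, ← i2, i3, i4]
    set A := S (B ∪ P1.support.toFinset)
    set C := S (insert v (B ∪ P1.support.dropLast.toFinset))
    set D := S (insert v (B ∪ P1.support.tail.toFinset))
    -- goal : C * D * (A * C) * (D * A * 1) = 1
    have habc : ∀ a c d : ℤˣ, c * d * (a * c) * (d * a * 1) = 1 := by decide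
    exact habc A C D

end SignedGraph

namespace SignedGraph

variable {V : Type*} [DecidableEq V] {k : ℕ}

lemma insert_sdiff_insert' {T : Finset V} {a b : V} (ha : a ∉ T) (hb : b ∉ T) (hab : a ≠ b) :
    insert a T \ insert b T = {a} := by
  ext x
  simp only [Finset.mem_sdiff, Finset.mem_insert, Finset.mem_singleton, not_or]
  constructor
  · rintro ⟨h1 | h1, h2, h3⟩
    · exact h1
    · exact absurd h1 h3
  · rintro rfl
    exact ⟨Or.inl rfl, hab, ha⟩

lemma eF_inj_edge {G : SimpleGraph V} {x y : Sym2 V} (hx : x ∈ G.edgeSet)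
    (hy : y ∈ G.edgeSet) (hxy : eF x = eF y) : x = y := by
  have hx' : ¬x.IsDiag := SimpleGraph.not_isDiag_of_mem_edgeSet G hx
  clear hx hy
  revert hxy hx'
  refine Sym2.ind (fun a b => ?_) x
  refine Sym2.ind (fun c d => ?_) y
  intro hEF hdiag
  simp only [eF_mk] at hEF
  exact pair_eq_sym2 (by simpa using hdiag) hEF

lemma token_esign_eq (Γ : SignedGraph V) {E : Sym2 {A : Finset V // A.card = k}}
    {e : Sym2 V} (hE : E ∈ (tokenAdj Γ.G k).edgeSet) (he : e ∈ Γ.G.edgeSet)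
    (hund : und2 k E = eF e) : (Γ.token k).esign E = Γ.esign e := by
  have hd : ¬e.IsDiag := SimpleGraph.not_isDiag_of_mem_edgeSet _ he
  clear he
  revert hE hund hd
  refine Sym2.ind (fun A B => ?_) E
  refine Sym2.ind (fun a b => ?_) e
  intro hE hund hd
  rw [SimpleGraph.mem_edgeSet] at hE
  obtain ⟨a', b', hadj', hA, hB, _, _, _, _, hs⟩ := tokenAdj_struct hE
  rw [und2_mk, eF_mk, hs] at hund
  have : s(a', b') = s(a, b) := pair_eq_sym2 hadj'.ne hund
  rw [esign_mk (Γ.token k) A B, token_sign_eq hA hB, ← esign_mk Γ a' b', this]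

end SignedGraph

open SignedGraph in
/-- `l(Γ) ≤ l(F_k(Γ)) ≤ C(n-2, k-1) · l(Γ)`. -/
theorem frustration_token_bounds {V : Type*} [Fintype V] [DecidableEq V] (n k : ℕ)
    (hn : Fintype.card V = n) (hk1 : 1 ≤ k) (hk2 : k ≤ n - 1) (Γ : SignedGraph V) :
    Γ.frustrationIndex ≤ (Γ.token k).frustrationIndex ∧
    (Γ.token k).frustrationIndex ≤ (n - 2).choose (k - 1) * Γ.frustrationIndex := by
  classical
  have hn2 : 2 ≤ n := by omega
  constructor
  · -- LOWER BOUND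
    obtain ⟨F', hcard', hsub', hneg', hbal'⟩ :=
      Nat.sInf_mem (frustSet_nonempty (Γ.token k))
    set F := (Set.toFinite Γ.G.edgeSet).toFinset.filter
      (fun e => ∃ E ∈ F', und2 k E = eF e) with hFdef
    have hFedge : ∀ e ∈ F, e ∈ Γ.G.edgeSet := by
      intro e he
      rw [hFdef, Finset.mem_filter] at he
      exact (Set.Finite.mem_toFinset _).mp he.1
    have step1 : Γ.frustrationIndex ≤ F.card := by
      apply Nat.sInf_le
      refine ⟨F, rfl, ?_, ?_, ?_⟩
      · intro e he
        exact hFedge e he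
      · -- negativity
        intro e he
        have heE : e ∈ Γ.G.edgeSet := hFedge e he
        rw [hFdef, Finset.mem_filter] at he
        obtain ⟨_, E, hEF', hund⟩ := he
        have hEedge : E ∈ (tokenAdj Γ.G k).edgeSet := hsub' hEF'
        have := token_esign_eq Γ hEedge heE hund
        rw [← this]
        exact hneg' E hEF'
      · -- balance
        obtain ⟨S0, hS0⟩ := hbal'.exists_potential
        set S : Finset V → ℤˣ := fun A => if hA : A.card = k then S0 ⟨A, hA⟩ else 1 with hSdef
        apply balanced_of_token_potential (n := n) _ hn hk1 hk2 S
        intro a b T hadj haT hbT hT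
        rw [SimpleGraph.deleteEdges_adj] at hadj
        obtain ⟨hab, hnF⟩ := hadj
        have hane : a ≠ b := hab.ne
        have hca : (insert a T).card = k := by
          rw [Finset.card_insert_of_notMem haT, hT]; omega
        have hcb : (insert b T).card = k := by
          rw [Finset.card_insert_of_notMem hbT, hT]; omega
        set X : {A : Finset V // A.card = k} := ⟨insert a T, hca⟩ with hXdef
        set Y : {A : Finset V // A.card = k} := ⟨insert b T, hcb⟩ with hYdef
        have hXYadj : (tokenAdj Γ.G k).Adj X Y :=
          ⟨a, b, Finset.mem_insert_self a T, Finset.mem_insert_self b T, hab,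
            symmDiff_insert_insert haT hbT hane⟩
        have hnotF' : s(X, Y) ∉ (↑F' : Set (Sym2 {A : Finset V // A.card = k})) := by
          intro hmem
          apply hnF
          rw [Finset.mem_coe, hFdef, Finset.mem_filter]
          refine ⟨(Set.Finite.mem_toFinset _).mpr ((SimpleGraph.mem_edgeSet _).mpr hab),
            s(X, Y), hmem, ?_⟩
          rw [und2_mk, eF_mk]
          exact symmDiff_insert_insert haT hbT hane
        have hdelAdj : ((Γ.token k).G.deleteEdges ↑F').Adj X Y := by
          rw [SimpleGraph.deleteEdges_adj]
          exact ⟨hXYadj, hnotF'⟩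
        have h1 := hS0 X Y hdelAdj
        have h2 : (Γ.token k).sign X Y = Γ.sign a b := by
          apply token_sign_eq
          · exact insert_sdiff_insert' haT hbT hane
          · exact insert_sdiff_insert' hbT haT hane.symm
        rw [h2] at h1
        rw [h1, hSdef]
        simp only [dif_pos hca, dif_pos hcb]
        rfl
    have step2 : F.card ≤ F'.card := by
      rcases Finset.eq_empty_or_nonempty F' with rfl | hne
      · have hFe : F = ∅ := by
          rw [hFdef]
          apply Finset.filter_false_of_mem
          rintro e _ ⟨E, hE, _⟩
          simp at hE
        simp [hFe]
      · obtain ⟨E0, hE0⟩ := hne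
        apply Finset.card_le_card_of_injOn
          (f := fun e => if h : ∃ E ∈ F', und2 k E = eF e then h.choose else E0)
        · intro e he
          rw [hFdef, Finset.mem_coe, Finset.mem_filter] at he
          beta_reduce
          rw [dif_pos he.2]
          exact he.2.choose_spec.1
        · intro e1 he1 e2 he2 hf
          rw [Finset.mem_coe, hFdef, Finset.mem_filter] at he1 he2
          simp only [dif_pos he1.2, dif_pos he2.2] at hf
          have h1 := he1.2.choose_spec.2
          have h2 := he2.2.choose_spec.2
          rw [hf, h2] at h1
          exact (eF_inj_edge ((Set.Finite.mem_toFinset _).mp he2.1)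
            ((Set.Finite.mem_toFinset _).mp he1.1) h1).symm
    calc Γ.frustrationIndex ≤ F.card := step1
      _ ≤ F'.card := step2
      _ = (Γ.token k).frustrationIndex := hcard'
  · -- UPPER BOUND
    obtain ⟨F, hFcard, hFsub, hFneg, hFbal⟩ := Nat.sInf_mem (frustSet_nonempty Γ)
    set TE := (Set.toFinite (tokenAdj Γ.G k).edgeSet).toFinset with hTEdef
    set TEs := (Set.toFinite (tokenAdj (Γ.G.deleteEdges ↑F) k).edgeSet).toFinset with hTEsdef
    have hsubTE : TEs ⊆ TE := by
      intro E hE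
      rw [hTEsdef, Set.Finite.mem_toFinset] at hE
      rw [hTEdef, Set.Finite.mem_toFinset]
      exact SimpleGraph.edgeSet_mono (tokenAdj_mono (SimpleGraph.deleteEdges_le _)) hE
    set F2 := TE \ TEs with hF2def
    have hcoeF2 : (↑F2 : Set (Sym2 {A : Finset V // A.card = k}))
        = (tokenAdj Γ.G k).edgeSet \ (tokenAdj (Γ.G.deleteEdges ↑F) k).edgeSet := by
      rw [hF2def, Finset.coe_sdiff, hTEdef, hTEsdef, Set.Finite.coe_toFinset,
        Set.Finite.coe_toFinset]
    have hgraph : (Γ.token k).G.deleteEdges ↑F2 = tokenAdj (Γ.G.deleteEdges ↑F) k := by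
      rw [hcoeF2]
      exact deleteEdges_tokenAdj Γ.G ↑F
    have hFc2 : F.card = Γ.frustrationIndex := hFcard
    have hFsubfin : F ⊆ (Set.toFinite Γ.G.edgeSet).toFinset := by
      intro e he
      rw [Set.Finite.mem_toFinset]
      exact hFsub he
    have hF2card : F2.card = (n - 2).choose (k - 1) * Γ.frustrationIndex := by
      rw [hF2def, Finset.card_sdiff_of_subset hsubTE, hTEdef, hTEsdef,
        card_tokenEdges Γ.G hn hk1, card_tokenEdges (Γ.G.deleteEdges ↑F) hn hk1]
      have hEGs : (Set.toFinite (Γ.G.deleteEdges ↑F).edgeSet).toFinset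
          = (Set.toFinite Γ.G.edgeSet).toFinset \ F := by
        ext e
        rw [Set.Finite.mem_toFinset, SimpleGraph.edgeSet_deleteEdges, Set.mem_diff,
          Finset.mem_sdiff, Set.Finite.mem_toFinset, Finset.mem_coe]
      rw [hEGs, Finset.card_sdiff_of_subset hFsubfin, ← Nat.mul_sub_left_distrib]
      have hle : F.card ≤ (Set.toFinite Γ.G.edgeSet).toFinset.card :=
        Finset.card_le_card hFsubfin
      congr 1
      omega
    have hmemle : (Γ.token k).frustrationIndex ≤ F2.card := by
      apply Nat.sInf_le
      refine ⟨F2, rfl, ?_, ?_, ?_⟩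
      · -- subset of edge set
        intro E hE
        have : (↑F2 : Set (Sym2 {A : Finset V // A.card = k})) ⊆
            (tokenAdj Γ.G k).edgeSet := by
          rw [hcoeF2]; exact Set.diff_subset
        exact this hE
      · -- negativity
        intro E hE
        rw [hF2def, Finset.mem_sdiff, hTEdef, hTEsdef, Set.Finite.mem_toFinset,
          Set.Finite.mem_toFinset] at hE
        obtain ⟨hEbig, hEsmall⟩ := hE
        revert hEbig hEsmall
        refine Sym2.ind (fun A B => ?_) E
        intro hEbig hEsmall
        have hadj : (tokenAdj Γ.G k).Adj A B := (SimpleGraph.mem_edgeSet _).mp hEbig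
        obtain ⟨a', b', hadj', hA, hB, ha'A, hb'B, _, _, hs⟩ := tokenAdj_struct hadj
        have hFmem : s(a', b') ∈ F := by
          by_contra hcon
          apply hEsmall
          rw [SimpleGraph.mem_edgeSet]
          refine ⟨a', b', ha'A, hb'B, ?_, hs⟩
          rw [SimpleGraph.deleteEdges_adj]
          exact ⟨hadj', fun hmem => hcon (Finset.mem_coe.mp hmem)⟩
        have := token_esign_eq Γ hEbig ((SimpleGraph.mem_edgeSet _).mpr hadj')
          (by rw [und2_mk, eF_mk, hs])
        rw [this]
        exact hFneg _ hFmem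
      · -- balance
        obtain ⟨s, hs⟩ := hFbal.exists_potential
        apply balanced_of_potential _ (fun A => ∏ v ∈ A.1, s v)
        intro A B hAdj
        have hAdj' : (tokenAdj (Γ.G.deleteEdges ↑F) k).Adj A B := by
          rw [← hgraph]; exact hAdj
        obtain ⟨a', b', hadj', hA, hB, _, _, ha'B, hb'A, _⟩ := tokenAdj_struct hAdj'
        have hsign : (Γ.token k).sign A B = Γ.sign a' b' := token_sign_eq hA hB
        have ha'S : a' ∉ A.1 ∩ B.1 := fun h => ha'B (Finset.mem_inter.mp h).2
        have hb'S : b' ∉ A.1 ∩ B.1 := fun h => hb'A (Finset.mem_inter.mp h).1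
        have hAeq : A.1 = insert a' (A.1 ∩ B.1) := by
          rw [Finset.insert_eq, ← hA, Finset.sdiff_union_inter]
        have hBeq : B.1 = insert b' (A.1 ∩ B.1) := by
          rw [Finset.insert_eq, ← hB, Finset.inter_comm, Finset.sdiff_union_inter]
        have hprodA : ∏ v ∈ A.1, s v = s a' * ∏ v ∈ A.1 ∩ B.1, s v := by
          conv_lhs => rw [hAeq]
          rw [Finset.prod_insert ha'S]
        have hprodB : ∏ v ∈ B.1, s v = s b' * ∏ v ∈ A.1 ∩ B.1, s v := by
          conv_lhs => rw [hBeq]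
          rw [Finset.prod_insert hb'S]
        show (Γ.token k).sign A B = (∏ v ∈ A.1, s v) * ∏ v ∈ B.1, s v
        rw [hsign, hs a' b' hadj', hprodA, hprodB]
        set Q := ∏ v ∈ A.1 ∩ B.1, s v
        have key : ∀ x y q : ℤˣ, x * y = x * q * (y * q) := by decide
        exact key (s a') (s b') Q
    rw [hF2card] at hmemle
    exact hmemle
end

section
/- Let Γ be a signed graph on n vertices and let 1 ≤ k ≤ n−1. If Γ is sign-symmetric (i.e., Γ is switching isomorphic to its negation −Γ), then its k-token signed graph F_k(Γ) is also sign-symmetric (i.e., F_k(Γ) is switching isomorphic to −F_k(Γ)). -/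
open scoped Classical

/-- The equivalence on `k`-subsets induced by an equivalence on points. -/
def subsetEquiv {V : Type*} [DecidableEq V] (k : ℕ) (f : V ≃ V) :
    {A : Finset V // A.card = k} ≃ {A : Finset V // A.card = k} where
  toFun A := ⟨A.1.map f.toEmbedding, by rw [Finset.card_map]; exact A.2⟩
  invFun A := ⟨A.1.map f.symm.toEmbedding, by rw [Finset.card_map]; exact A.2⟩
  left_inv A := by
    apply Subtype.ext
    ext x
    simp [Finset.mem_map_equiv]
  right_inv A := by
    apply Subtype.ext
    ext x
    simp [Finset.mem_map_equiv]

lemma equivMap_symmDiff {V : Type*} [DecidableEq V] (f : V ≃ V) (A B : Finset V) :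
    symmDiff (A.map f.toEmbedding) (B.map f.toEmbedding) = (symmDiff A B).map f.toEmbedding := by
  ext x
  simp only [Finset.mem_map_equiv, Finset.mem_symmDiff]

lemma equivMap_sdiff {V : Type*} [DecidableEq V] (f : V ≃ V) (A B : Finset V) :
    (A.map f.toEmbedding) \ (B.map f.toEmbedding) = (A \ B).map f.toEmbedding := by
  ext x
  simp only [Finset.mem_map_equiv, Finset.mem_sdiff]

lemma tokenAdj_map {V : Type*} [DecidableEq V] {G : SimpleGraph V} (f : V ≃ V)
    (hadj : ∀ u v, G.Adj u v → G.Adj (f u) (f v)) {k : ℕ}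
    {A B : {A : Finset V // A.card = k}}
    (h : (SignedGraph.tokenAdj G k).Adj A B) :
    (SignedGraph.tokenAdj G k).Adj (subsetEquiv k f A) (subsetEquiv k f B) := by
  obtain ⟨a, b, ha, hb, hab, hs⟩ := h
  refine ⟨f a, f b, Finset.mem_map_of_mem _ ha, Finset.mem_map_of_mem _ hb, hadj a b hab, ?_⟩
  show symmDiff (A.1.map f.toEmbedding) (B.1.map f.toEmbedding) = {f a, f b}
  rw [equivMap_symmDiff, hs]
  simp [Finset.map_insert]

lemma sdiff_eq_singleton_of_tokenAdj {V : Type*} [DecidableEq V] {A B : Finset V}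
    {a b : V} (ha : a ∈ A) (hab : a ≠ b) (hbA : b ∉ A)
    (hs : symmDiff A B = {a, b}) : A \ B = {a} := by
  ext x
  simp only [Finset.mem_sdiff, Finset.mem_singleton]
  constructor
  · rintro ⟨hxA, hxB⟩
    have hx : x ∈ symmDiff A B := Finset.mem_symmDiff.mpr (Or.inl ⟨hxA, hxB⟩)
    rw [hs] at hx
    rcases Finset.mem_insert.mp hx with h | h
    · exact h
    · rw [Finset.mem_singleton] at h
      exact absurd (h ▸ hxA) hbA
  · rintro rfl
    refine ⟨ha, fun hxB => ?_⟩
    have hx : x ∈ symmDiff A B := by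
      rw [hs]; exact Finset.mem_insert_self x {b}
    rcases Finset.mem_symmDiff.mp hx with ⟨_, h⟩ | ⟨_, h⟩
    · exact h hxB
    · exact h ha

/-- if `Γ` is sign-symmetric then so is `F_k(Γ)`. -/
theorem token_signSymmetric {V : Type*} [Fintype V] [DecidableEq V] (n k : ℕ)
    (hn : Fintype.card V = n) (hk1 : 1 ≤ k) (hk2 : k ≤ n - 1)
    (Γ : SignedGraph V) (h : Γ.SwitchIso Γ.neg) :
    (Γ.token k).SwitchIso ((Γ.token k).neg) := by
  obtain ⟨U, ⟨φ⟩⟩ := h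
  set f := φ.toEquiv with hf
  -- the ±1 indicator of the switching set
  set χ : V → ℤˣ := fun v => if v ∈ U then (-1 : ℤˣ) else 1 with hχ
  -- the switching set for the token graph: subsets meeting `U` an odd number of times
  set 𝒰 : Set {A : Finset V // A.card = k} := {A | ∏ v ∈ A.1, χ v = -1} with h𝒰
  have hind : ∀ A : {A : Finset V // A.card = k},
      (if A ∈ 𝒰 then (-1 : ℤˣ) else 1) = ∏ v ∈ A.1, χ v := by
    intro A
    by_cases hA : A ∈ 𝒰
    · rw [if_pos hA]; exact hA.symm
    · rw [if_neg hA]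
      rcases Int.units_eq_one_or (∏ v ∈ A.1, χ v) with h1 | h1
      · exact h1.symm
      · exact absurd h1 hA
  refine ⟨𝒰, ⟨{ toEquiv := subsetEquiv k f, adj_iff := ?_, sign_eq := ?_ }⟩⟩
  · -- adjacency is preserved
    intro A B
    show (SignedGraph.tokenAdj Γ.G k).Adj A B ↔
      (SignedGraph.tokenAdj Γ.G k).Adj (subsetEquiv k f A) (subsetEquiv k f B)
    constructor
    · exact tokenAdj_map f (fun u v huv => (φ.adj_iff u v).mp huv)
    · intro h'
      have hback : ∀ u v, Γ.G.Adj u v → Γ.G.Adj (f.symm u) (f.symm v) := by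
        intro u v huv
        have := (φ.adj_iff (f.symm u) (f.symm v)).mpr
        simp only [Equiv.apply_symm_apply, ← hf] at this
        exact this huv
      have := tokenAdj_map f.symm hback h'
      have heq1 : subsetEquiv k f.symm (subsetEquiv k f A) = A := by
        have : subsetEquiv k f.symm (subsetEquiv k f A) =
            (subsetEquiv k f).symm (subsetEquiv k f A) := rfl
        rw [this, Equiv.symm_apply_apply]
      have heq2 : subsetEquiv k f.symm (subsetEquiv k f B) = B := by
        have : subsetEquiv k f.symm (subsetEquiv k f B) =
            (subsetEquiv k f).symm (subsetEquiv k f B) := rfl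
        rw [this, Equiv.symm_apply_apply]
      rwa [heq1, heq2] at this
  · -- signs agree on edges
    rintro A B ⟨a, b, ha, hb, hab, hs⟩
    have hne : a ≠ b := hab.ne
    have hbA : b ∉ A.1 := by
      intro hbA
      have hx : b ∈ symmDiff A.1 B.1 := by
        rw [hs]; exact Finset.mem_insert_of_mem (Finset.mem_singleton_self b)
      rcases Finset.mem_symmDiff.mp hx with ⟨_, h2⟩ | ⟨_, h2⟩
      · exact h2 hb
      · exact h2 hbA
    have haB : a ∉ B.1 := by
      intro haB
      have hx : a ∈ symmDiff A.1 B.1 := by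
        rw [hs]; exact Finset.mem_insert_self a {b}
      rcases Finset.mem_symmDiff.mp hx with ⟨_, h2⟩ | ⟨_, h2⟩
      · exact h2 haB
      · exact h2 ha
    have hAB : A.1 \ B.1 = {a} := sdiff_eq_singleton_of_tokenAdj ha hne hbA hs
    have hBA : B.1 \ A.1 = {b} := sdiff_eq_singleton_of_tokenAdj hb hne.symm haB
      (by rw [symmDiff_comm, hs, Finset.pair_comm])
    -- decompositions of A and B
    have haI : a ∉ A.1 ∩ B.1 := fun h' => haB (Finset.mem_of_mem_inter_right h')
    have hbI : b ∉ A.1 ∩ B.1 := fun h' => hbA (Finset.mem_of_mem_inter_left h')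
    have hAdec : A.1 = insert a (A.1 ∩ B.1) := by
      ext x
      simp only [Finset.mem_insert, Finset.mem_inter]
      constructor
      · intro hx
        by_cases hxB : x ∈ B.1
        · exact Or.inr ⟨hx, hxB⟩
        · have : x ∈ A.1 \ B.1 := Finset.mem_sdiff.mpr ⟨hx, hxB⟩
          rw [hAB, Finset.mem_singleton] at this
          exact Or.inl this
      · rintro (rfl | ⟨hx, _⟩)
        · exact ha
        · exact hx
    have hBdec : B.1 = insert b (A.1 ∩ B.1) := by
      ext x
      simp only [Finset.mem_insert, Finset.mem_inter]
      constructor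
      · intro hx
        by_cases hxA : x ∈ A.1
        · exact Or.inr ⟨hxA, hx⟩
        · have : x ∈ B.1 \ A.1 := Finset.mem_sdiff.mpr ⟨hx, hxA⟩
          rw [hBA, Finset.mem_singleton] at this
          exact Or.inl this
      · rintro (rfl | ⟨_, hx⟩)
        · exact hb
        · exact hx
    -- compute the product of indicators
    have hprodA : ∏ v ∈ A.1, χ v = χ a * ∏ v ∈ A.1 ∩ B.1, χ v := by
      conv_lhs => rw [hAdec]
      rw [Finset.prod_insert haI]
    have hprodB : ∏ v ∈ B.1, χ v = χ b * ∏ v ∈ A.1 ∩ B.1, χ v := by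
      conv_lhs => rw [hBdec]
      rw [Finset.prod_insert hbI]
    have hindAB : (if A ∈ 𝒰 then (-1 : ℤˣ) else 1) * (if B ∈ 𝒰 then (-1 : ℤˣ) else 1)
        = χ a * χ b := by
      rw [hind A, hind B, hprodA, hprodB]
      have hsq : (∏ v ∈ A.1 ∩ B.1, χ v) * (∏ v ∈ A.1 ∩ B.1, χ v) = 1 :=
        Int.units_mul_self _
      rw [mul_mul_mul_comm, hsq, mul_one]
    -- the sdiffs of the mapped sets
    have hAB' : (subsetEquiv k f A).1 \ (subsetEquiv k f B).1 = {f a} := by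
      show A.1.map f.toEmbedding \ B.1.map f.toEmbedding = {f a}
      rw [equivMap_sdiff, hAB, Finset.map_singleton]
      rfl
    have hBA' : (subsetEquiv k f B).1 \ (subsetEquiv k f A).1 = {f b} := by
      show B.1.map f.toEmbedding \ A.1.map f.toEmbedding = {f b}
      rw [equivMap_sdiff, hBA, Finset.map_singleton]
      rfl
    -- the key sign identity from φ
    have hφ : (Γ.switch U).sign a b = Γ.neg.sign (f a) (f b) := φ.sign_eq a b hab
    dsimp only [SignedGraph.switch, SignedGraph.token, SignedGraph.neg]
    rw [hAB, hBA, hAB', hBA', Finset.prod_singleton, Finset.prod_singleton,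
      Finset.prod_singleton, Finset.prod_singleton]
    have hkey : χ a * χ b * Γ.sign a b = -Γ.sign (f a) (f b) := by
      have hsw : χ a * χ b * Γ.sign a b = (Γ.switch U).sign a b := rfl
      rw [hsw, hφ]
      rfl
    by_cases h1 : A ∈ 𝒰 <;> by_cases h2 : B ∈ 𝒰 <;>
      simp only [h1, h2, if_true, if_false] at hindAB ⊢ <;>
      rw [hindAB] <;> exact hkey
end

section
/- Let Γ = (G, σ) be a balanced signed graph on n vertices, let Γ̄_σ be its signed complement (with respect to a diagonal ±1 matrix S witnessing balance), let 1 ≤ k ≤ n−1, and set N = C(n,k). Then there exist enumerations (x_1, …, x_N) of the Laplacian eigenvalues of F_k(Γ) with multiplicity and (y_1, …, y_N) of the Laplacian eigenvalues of F_k(Γ̄_σ) with multiplicity such that the multiset {x_i + y_i : i = 1, …, N} is exactly the multiset of Laplacian eigenvalues of the Johnson graph J(n, k) = F_k(K_n); that is, every Laplacian eigenvalue of the Johnson graph is the sum of one eigenvalue of F_k(Γ) and one of F_k(Γ̄_σ), each eigenvalue being used exactly once. -/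
open scoped Classical

open Polynomial Module

section Spectral

variable {m : Type*} [Fintype m] [DecidableEq m]

lemma charpoly_diagonal' (x : m → ℝ) :
    (Matrix.diagonal x).charpoly = ∏ i, (X - C (x i)) := by
  rw [Matrix.charpoly, ← Matrix.det_diagonal]
  congr 1
  ext i j
  by_cases h : i = j
  · subst h; simp [Matrix.charmatrix_apply_eq]
  · simp [Matrix.charmatrix_apply_ne _ _ _ h, Matrix.diagonal_apply_ne _ h]

lemma simul_diag (A B : Matrix m m ℝ) (hA : A.IsHermitian) (hB : B.IsHermitian)
    (hc : A * B = B * A) :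
    ∃ x y : Fin (Fintype.card m) → ℝ,
      A.charpoly = ∏ i, (X - C (x i)) ∧ B.charpoly = ∏ i, (X - C (y i)) ∧
      (A + B).charpoly = ∏ i, (X - C (x i + y i)) := by
  classical
  set fA := Matrix.toEuclideanLin A with hfA
  set fB := Matrix.toEuclideanLin B with hfB
  have hA' : fA.IsSymmetric := Matrix.isHermitian_iff_isSymmetric.mp hA
  have hB' : fB.IsSymmetric := Matrix.isHermitian_iff_isSymmetric.mp hB
  have hmul : ∀ M N : Matrix m m ℝ,
      Matrix.toEuclideanLin (M * N) = Matrix.toEuclideanLin M ∘ₗ Matrix.toEuclideanLin N := by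
    intro M N
    simp [Matrix.toEuclideanLin_eq_toLin, Matrix.toLin_mul _ (PiLp.basisFun 2 ℝ m) _]
  have hc' : Commute fA fB := by
    show fA * fB = fB * fA
    have h1 : fA * fB = Matrix.toEuclideanLin (A * B) := by
      rw [hmul]; rfl
    have h2 : fB * fA = Matrix.toEuclideanLin (B * A) := by
      rw [hmul]; rfl
    rw [h1, h2, hc]
  have hint := LinearMap.IsSymmetric.directSum_isInternal_of_commute hA' hB' hc'
  set W : ℝ × ℝ → Submodule ℝ (EuclideanSpace ℝ m) :=
    fun i => Module.End.eigenspace fA i.2 ⊓ Module.End.eigenspace fB i.1 with hW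
  let bi : ∀ i, Basis (Fin (finrank ℝ (W i))) ℝ (W i) := fun i => Module.finBasis ℝ (W i)
  let b := hint.collectedBasis bi
  haveI : Fintype (Σ i : ℝ × ℝ, Fin (finrank ℝ (W i))) := FiniteDimensional.fintypeBasisIndex b
  set x0 : (Σ i : ℝ × ℝ, Fin (finrank ℝ (W i))) → ℝ := fun j => j.1.2 with hx0
  set y0 : (Σ i : ℝ × ℝ, Fin (finrank ℝ (W i))) → ℝ := fun j => j.1.1 with hy0
  have hbmem : ∀ j, b j ∈ W j.1 := fun j => hint.collectedBasis_mem bi j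
  have hbA : ∀ j, fA (b j) = x0 j • b j := fun j =>
    Module.End.mem_eigenspace_iff.mp (hbmem j).1
  have hbB : ∀ j, fB (b j) = y0 j • b j := fun j =>
    Module.End.mem_eigenspace_iff.mp (hbmem j).2
  have toMatrix_diag : ∀ (f : Module.End ℝ (EuclideanSpace ℝ m)) (z : _ → ℝ),
      (∀ j, f (b j) = z j • b j) → LinearMap.toMatrix b b f = Matrix.diagonal z := by
    intro f z hz
    ext i j
    rw [LinearMap.toMatrix_apply, hz j, map_smul, Basis.repr_self]
    by_cases h : i = j
    · subst h; simp
    · simp [Finsupp.single_apply, Ne.symm h, Matrix.diagonal_apply_ne _ h]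
  have hcard : Fintype.card (Σ i : ℝ × ℝ, Fin (finrank ℝ (W i))) = Fintype.card m := by
    rw [← Module.finrank_eq_card_basis b, finrank_euclideanSpace]
  let e := Fintype.equivFinOfCardEq hcard
  have charpoly_eq : ∀ (M : Matrix m m ℝ) (z : _ → ℝ),
      LinearMap.toMatrix b b (Matrix.toEuclideanLin M) = Matrix.diagonal z →
      M.charpoly = ∏ i : Fin (Fintype.card m), (X - C (z (e.symm i))) := by
    intro M z hz
    have h1 : M.charpoly = (Matrix.toEuclideanLin M).charpoly := by
      conv_lhs => rw [← LinearMap.toMatrix_toLin (PiLp.basisFun 2 ℝ m) (PiLp.basisFun 2 ℝ m) M]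
      rw [LinearMap.charpoly_toMatrix]
      rw [Matrix.toEuclideanLin_eq_toLin]
    rw [h1, ← LinearMap.charpoly_toMatrix (Matrix.toEuclideanLin M) b, hz, charpoly_diagonal']
    exact (Equiv.prod_comp e.symm _).symm
  refine ⟨x0 ∘ e.symm, y0 ∘ e.symm, ?_, ?_, ?_⟩
  · exact charpoly_eq A x0 (toMatrix_diag fA x0 hbA)
  · exact charpoly_eq B y0 (toMatrix_diag fB y0 hbB)
  · refine charpoly_eq (A + B) (x0 + y0) ?_
    rw [map_add, map_add, toMatrix_diag fA x0 hbA, toMatrix_diag fB y0 hbB,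
      Matrix.diagonal_add]
    rfl

end Spectral

namespace TokenProof

open Polynomial Module

variable {V : Type*} [DecidableEq V]

/-- abbreviation for the vertex type of token graphs -/
abbrev TT (V : Type*) (k : ℕ) := {A : Finset V // A.card = k}

/-- the permutation of `k`-subsets induced by a permutation of `V` -/
def permT (k : ℕ) (π : Equiv.Perm V) : Equiv.Perm (TT V k) :=
  π.finsetCongr.subtypeEquiv (fun A => by simp)

lemma permT_apply (k : ℕ) (π : Equiv.Perm V) (A : TT V k) :
    ((permT k π A) : Finset V) = A.1.map π.toEmbedding := rfl

lemma permT_mul (k : ℕ) (π ρ : Equiv.Perm V) :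
    permT k (π * ρ) = permT k π * permT k ρ := by
  ext A : 2
  show A.1.map (π * ρ).toEmbedding = (A.1.map ρ.toEmbedding).map π.toEmbedding
  rw [Finset.map_map]
  rfl

/-- permutation matrix (row convention: entry `(A,B)` is `1` iff `π A = B`) -/
noncomputable def pmat {m : Type*} (π : Equiv.Perm m) : Matrix m m ℝ :=
  Matrix.of fun A B => if π A = B then 1 else 0

lemma pmat_mul {m : Type*} [Fintype m] [DecidableEq m] (π ρ : Equiv.Perm m) :
    pmat (π * ρ) = pmat ρ * pmat π := by
  ext A B
  rw [Matrix.mul_apply]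
  simp only [pmat, Matrix.of_apply, Equiv.Perm.mul_apply]
  rw [Finset.sum_eq_single (ρ A)]
  · simp
    congr
  · intro x _ hx
    rw [if_neg (fun h => hx h.symm), zero_mul]
  · simp

/-- the swap permutation of `k`-subsets associated to an unordered pair -/
def swapT (k : ℕ) : Sym2 V → Equiv.Perm (TT V k) :=
  Sym2.lift ⟨fun a b => permT k (Equiv.swap a b), fun a b => by
    dsimp only; rw [Equiv.swap_comm]⟩

lemma swapT_mk (k : ℕ) (a b : V) : swapT k s(a, b) = permT k (Equiv.swap a b) := rfl

lemma map_swap_of_mem {a b : V} {A : Finset V} (ha : a ∈ A) (hb : b ∉ A) :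
    A.map (Equiv.swap a b).toEmbedding = insert b (A.erase a) := by
  ext x
  simp only [Finset.mem_map, Equiv.coe_toEmbedding, Finset.mem_insert, Finset.mem_erase]
  constructor
  · rintro ⟨y, hy, rfl⟩
    rcases eq_or_ne y a with rfl | hya
    · left; rw [Equiv.swap_apply_left]
    · rcases eq_or_ne y b with rfl | hyb
      · exact absurd hy hb
      · right; rw [Equiv.swap_apply_of_ne_of_ne hya hyb]; exact ⟨hya, hy⟩
  · rintro (hxb | ⟨hxa, hxA⟩)
    · exact ⟨a, ha, by rw [Equiv.swap_apply_left, hxb]⟩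
    · refine ⟨x, hxA, ?_⟩
      rcases eq_or_ne x b with rfl | hxb
      · exact absurd hxA hb
      · exact Equiv.swap_apply_of_ne_of_ne hxa hxb

lemma map_swap_of_iff {a b : V} {A : Finset V} (h : a ∈ A ↔ b ∈ A) :
    A.map (Equiv.swap a b).toEmbedding = A := by
  ext x
  simp only [Finset.mem_map, Equiv.coe_toEmbedding]
  constructor
  · rintro ⟨y, hy, rfl⟩
    rcases eq_or_ne y a with rfl | hya
    · rw [Equiv.swap_apply_left]; exact h.mp hy
    · rcases eq_or_ne y b with rfl | hyb
      · rw [Equiv.swap_apply_right]; exact h.mpr hy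
      · rwa [Equiv.swap_apply_of_ne_of_ne hya hyb]
  · intro hx
    rcases eq_or_ne x a with hxa | hxa
    · exact ⟨b, h.mp (hxa ▸ hx), by rw [Equiv.swap_apply_right, hxa]⟩
    · rcases eq_or_ne x b with hxb | hxb
      · exact ⟨a, h.mpr (hxb ▸ hx), by rw [Equiv.swap_apply_left, hxb]⟩
      · exact ⟨x, hx, Equiv.swap_apply_of_ne_of_ne hxa hxb⟩

lemma symmDiff_insert_erase {a b : V} {A : Finset V} (ha : a ∈ A) (hb : b ∉ A) :
    symmDiff A (insert b (A.erase a)) = {a, b} := by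
  have hab : a ≠ b := fun h => hb (h ▸ ha)
  ext x
  simp only [Finset.mem_symmDiff, Finset.mem_insert, Finset.mem_erase, Finset.mem_singleton]
  by_cases hxa : x = a <;> by_cases hxb : x = b <;> subst_eqs <;> simp_all <;> tauto

/-- unpack adjacency in the token graph -/
lemma tokenAdj_unpack {G : SimpleGraph V} {k : ℕ} {A B : TT V k} {a b : V}
    (ha : a ∈ A.1) (hb : b ∈ B.1) (hab : G.Adj a b) (hs : symmDiff A.1 B.1 = {a, b}) :
    A.1 \ B.1 = {a} ∧ B.1 \ A.1 = {b} ∧ b ∉ A.1 ∧ B.1 = insert b (A.1.erase a) := by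
  have hne : a ≠ b := G.ne_of_adj hab
  have haB : a ∉ B.1 := by
    intro haB
    have : a ∉ symmDiff A.1 B.1 := by
      simp [Finset.mem_symmDiff, ha, haB]
    rw [hs] at this; simp at this
  have hbA : b ∉ A.1 := by
    intro hbA
    have : b ∉ symmDiff A.1 B.1 := by
      simp [Finset.mem_symmDiff, hb, hbA]
    rw [hs] at this; simp at this
  have hAB : A.1 \ B.1 = {a} := by
    ext x
    simp only [Finset.mem_sdiff, Finset.mem_singleton]
    constructor
    · rintro ⟨hx1, hx2⟩
      have : x ∈ symmDiff A.1 B.1 := by simp [Finset.mem_symmDiff, hx1, hx2]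
      rw [hs] at this
      rcases Finset.mem_insert.mp this with rfl | h
      · rfl
      · rw [Finset.mem_singleton] at h; subst h; exact absurd hx1 hbA
    · rintro rfl; exact ⟨ha, haB⟩
  have hBA : B.1 \ A.1 = {b} := by
    ext x
    simp only [Finset.mem_sdiff, Finset.mem_singleton]
    constructor
    · rintro ⟨hx1, hx2⟩
      have : x ∈ symmDiff A.1 B.1 := by simp [Finset.mem_symmDiff, hx1, hx2]
      rw [hs] at this
      rcases Finset.mem_insert.mp this with rfl | h
      · exact absurd hx1 haB
      · exact Finset.mem_singleton.mp h
    · rintro rfl; exact ⟨hb, hbA⟩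
  refine ⟨hAB, hBA, hbA, ?_⟩
  ext x
  simp only [Finset.mem_insert, Finset.mem_erase]
  constructor
  · intro hx
    rcases eq_or_ne x b with rfl | hxb
    · exact Or.inl rfl
    · right
      have hxA : x ∈ A.1 := by
        by_contra hxA
        have : x ∈ B.1 \ A.1 := Finset.mem_sdiff.mpr ⟨hx, hxA⟩
        rw [hBA, Finset.mem_singleton] at this; exact hxb this
      refine ⟨?_, hxA⟩
      rintro rfl; exact haB hx
  · rintro (rfl | ⟨hxa, hxA⟩)
    · exact hb
    · by_contra hxB
      have : x ∈ A.1 \ B.1 := Finset.mem_sdiff.mpr ⟨hxA, hxB⟩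
      rw [hAB, Finset.mem_singleton] at this; exact hxa this

lemma sym2_of_pair_eq {a b c d : V} (hab : a ≠ b) (h : ({a, b} : Finset V) = {c, d}) :
    s(a, b) = s(c, d) := by
  have h1 : a ∈ ({c, d} : Finset V) := h ▸ (by simp)
  have h2 : b ∈ ({c, d} : Finset V) := h ▸ (by simp)
  simp only [Finset.mem_insert, Finset.mem_singleton] at h1 h2
  rcases h1 with h1 | h1
  · rcases h2 with h2 | h2
    · exact absurd (h1.trans h2.symm) hab
    · rw [Sym2.eq_iff]; exact Or.inl ⟨h1, h2⟩
  · rcases h2 with h2 | h2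
    · rw [Sym2.eq_iff]; exact Or.inr ⟨h1, h2⟩
    · exact absurd (h1.trans h2.symm) hab

lemma swapT_coe (k : ℕ) (c d : V) (A : TT V k) :
    ((swapT k s(c, d) A : TT V k) : Finset V) = A.1.map (Equiv.swap c d).toEmbedding := rfl

lemma swap_gives_adj {G : SimpleGraph V} {k : ℕ} {A B : TT V k} {c d : V}
    (hcd : G.Adj c d) (hmap : swapT k s(c, d) A = B) (hAB : A ≠ B) :
    (SignedGraph.tokenAdj G k).Adj A B ∧ symmDiff A.1 B.1 = ({c, d} : Finset V) := by
  by_cases hc : c ∈ A.1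
  · by_cases hd : d ∈ A.1
    · exact absurd (hmap ▸ Subtype.ext ((swapT_coe k c d A).trans
        (map_swap_of_iff (iff_of_true hc hd)))).symm hAB
    · have hB : B.1 = insert d (A.1.erase c) := by
        rw [← hmap, swapT_coe, map_swap_of_mem hc hd]
      have hsymm : symmDiff A.1 B.1 = {c, d} := by
        rw [hB]; exact symmDiff_insert_erase hc hd
      exact ⟨⟨c, d, hc, hB ▸ Finset.mem_insert_self d _, hcd, hsymm⟩, hsymm⟩
  · by_cases hd : d ∈ A.1
    · have hB : B.1 = insert c (A.1.erase d) := by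
        rw [← hmap, swapT_coe, Equiv.swap_comm, map_swap_of_mem hd hc]
      have hsymm : symmDiff A.1 B.1 = {d, c} := by
        rw [hB]; exact symmDiff_insert_erase hd hc
      exact ⟨⟨d, c, hd, hB ▸ Finset.mem_insert_self c _, hcd.symm, hsymm⟩,
        by rw [hsymm, Finset.pair_comm]⟩
    · exact absurd (hmap ▸ Subtype.ext ((swapT_coe k c d A).trans
        (map_swap_of_iff (iff_of_false hc hd)))).symm hAB

lemma swap_gives_adj' {G : SimpleGraph V} {k : ℕ} {A B : TT V k} {e : Sym2 V}
    (he : e ∈ G.edgeSet) (hmap : swapT k e A = B) (hAB : A ≠ B) :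
    (SignedGraph.tokenAdj G k).Adj A B ∧ ∀ c d : V, e = s(c, d) → symmDiff A.1 B.1 = {c, d} := by
  revert he hmap
  refine Sym2.ind (fun c d => ?_) e
  intro he hmap
  obtain ⟨h1, h2⟩ := swap_gives_adj ((SimpleGraph.mem_edgeSet _).mp he) hmap hAB
  refine ⟨h1, fun c' d' hcd => ?_⟩
  rcases Sym2.eq_iff.mp hcd with ⟨rfl, rfl⟩ | ⟨rfl, rfl⟩
  · exact h2
  · rw [h2, Finset.pair_comm]

lemma mk_of_adj {G : SimpleGraph V} {k : ℕ} {A B : TT V k}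
    (h : (SignedGraph.tokenAdj G k).Adj A B) :
    ∃ a b : V, G.Adj a b ∧ swapT k s(a, b) A = B ∧ symmDiff A.1 B.1 = {a, b} := by
  obtain ⟨a, b, ha, hb, hab, hs⟩ := h
  obtain ⟨_, _, hbA, hBeq⟩ := tokenAdj_unpack ha hb hab hs
  refine ⟨a, b, hab, ?_, hs⟩
  exact Subtype.ext ((swapT_coe k a b A).trans ((map_swap_of_mem ha hbA).trans hBeq.symm))

lemma swap_eq_unique {G : SimpleGraph V} {k : ℕ} {A B : TT V k} (hAB : A ≠ B)
    {e1 e2 : Sym2 V} (h1 : e1 ∈ G.edgeSet) (h2 : e2 ∈ G.edgeSet)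
    (m1 : swapT k e1 A = B) (m2 : swapT k e2 A = B) : e1 = e2 := by
  revert h1 m1
  refine Sym2.ind (fun c d => ?_) e1
  revert h2 m2
  refine Sym2.ind (fun c' d' => ?_) e2
  intro h2 m2 h1 m1
  have hcd : G.Adj c d := (SimpleGraph.mem_edgeSet _).mp h1
  have s1 := (swap_gives_adj hcd m1 hAB).2
  have s2 := (swap_gives_adj ((SimpleGraph.mem_edgeSet _).mp h2) m2 hAB).2
  exact sym2_of_pair_eq (G.ne_of_adj hcd) (s1.symm.trans s2)

variable [Fintype V]

/-- edge finset with a fixed (classical) instance -/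
noncomputable def EF (G : SimpleGraph V) : Finset (Sym2 V) := G.edgeFinset

lemma mem_EF {G : SimpleGraph V} {e : Sym2 V} : e ∈ EF G ↔ e ∈ G.edgeSet :=
  SimpleGraph.mem_edgeFinset

lemma card_filter_swap (G : SimpleGraph V) (k : ℕ) (A B : TT V k) (hAB : A ≠ B) :
    ((EF G).filter (fun e => swapT k e A = B)).card
      = if (SignedGraph.tokenAdj G k).Adj A B then 1 else 0 := by
  split_ifs with h
  · obtain ⟨a, b, hab, hmapab, hs⟩ := mk_of_adj h
    rw [Finset.card_eq_one]
    refine ⟨s(a, b), ?_⟩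
    rw [Finset.eq_singleton_iff_unique_mem]
    constructor
    · exact Finset.mem_filter.mpr ⟨mem_EF.mpr ((SimpleGraph.mem_edgeSet _).mpr hab), hmapab⟩
    · intro e he
      obtain ⟨heE, hemap⟩ := Finset.mem_filter.mp he
      exact swap_eq_unique hAB (mem_EF.mp heE)
        ((SimpleGraph.mem_edgeSet _).mpr hab) hemap hmapab
  · rw [Finset.card_eq_zero, Finset.filter_eq_empty_iff]
    intro e heE hemap
    exact h (swap_gives_adj' (mem_EF.mp heE) hemap hAB).1

lemma degree_eq_card_filter (G : SimpleGraph V) (k : ℕ) (A : TT V k) :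
    (SignedGraph.tokenAdj G k).degree A
      = ((EF G).filter fun e => swapT k e A ≠ A).card := by
  rw [← SimpleGraph.card_neighborFinset_eq_degree]
  symm
  refine Finset.card_bij (fun e _ => swapT k e A) ?_ ?_ ?_
  · intro e he
    obtain ⟨heE, hne⟩ := Finset.mem_filter.mp he
    rw [SimpleGraph.mem_neighborFinset]
    exact (swap_gives_adj' (mem_EF.mp heE) rfl (Ne.symm hne)).1
  · intro e1 h1 e2 h2 heq
    obtain ⟨h1E, h1ne⟩ := Finset.mem_filter.mp h1
    obtain ⟨h2E, _⟩ := Finset.mem_filter.mp h2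
    exact swap_eq_unique (Ne.symm h1ne) (mem_EF.mp h1E)
      (mem_EF.mp h2E) rfl heq.symm
  · intro B hB
    rw [SimpleGraph.mem_neighborFinset] at hB
    obtain ⟨a, b, hab, hmapab, _⟩ := mk_of_adj hB
    have hne : A ≠ B := (SignedGraph.tokenAdj G k).ne_of_adj hB
    refine ⟨s(a, b), Finset.mem_filter.mpr ⟨mem_EF.mpr ((SimpleGraph.mem_edgeSet _).mpr hab), ?_⟩, hmapab⟩
    rw [hmapab]
    exact Ne.symm hne

/-- all-positive signed graph on `G` -/
def posSG (G : SimpleGraph V) : SignedGraph V := ⟨G, fun _ _ => 1, fun _ _ => rfl⟩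

lemma sum_ite_swap (G : SimpleGraph V) (k : ℕ) (A B : TT V k) (hAB : A ≠ B) :
    ∑ e ∈ EF G, (if swapT k e A = B then (1 : ℝ) else 0)
      = if (SignedGraph.tokenAdj G k).Adj A B then (1 : ℝ) else 0 := by
  rw [Finset.sum_boole, card_filter_swap G k A B hAB]
  split_ifs <;> simp

lemma lap_pos (G : SimpleGraph V) (k : ℕ) :
    ((posSG G).token k).lapMatrix =
      ∑ e ∈ EF G, ((1 : Matrix (TT V k) (TT V k) ℝ) - pmat (swapT k e)) := by
  ext A B
  rw [Matrix.sum_apply]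
  by_cases hAB : A = B
  · subst hAB
    have hL : ((posSG G).token k).lapMatrix A A
        = ((SignedGraph.tokenAdj G k).degree A : ℝ) := by
      rw [SignedGraph.lapMatrix, Matrix.sub_apply, Matrix.diagonal_apply_eq]
      have h0 : ((posSG G).token k).adjMatrix A A = 0 := by
        rw [SignedGraph.adjMatrix, Matrix.of_apply, if_neg (SimpleGraph.irrefl _)]
      rw [h0, sub_zero]
      rfl
    rw [hL, degree_eq_card_filter G k A]
    have h1 : ∀ e ∈ EF G,
        ((1 : Matrix (TT V k) (TT V k) ℝ) - pmat (swapT k e)) A A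
          = if swapT k e A ≠ A then (1 : ℝ) else 0 := by
      intro e _
      by_cases h : swapT k e A = A <;>
        simp [Matrix.sub_apply, Matrix.one_apply_eq, pmat, h]
    rw [Finset.sum_congr rfl h1, Finset.sum_boole]
  · have hsign : (((posSG G).token k).sign A B) = 1 := by
      show (∏ a ∈ A.1 \ B.1, ∏ b ∈ B.1 \ A.1, (1 : ℤˣ)) = 1
      simp
    have hL : ((posSG G).token k).lapMatrix A B
        = -(if (SignedGraph.tokenAdj G k).Adj A B then (1 : ℝ) else 0) := by
      rw [SignedGraph.lapMatrix, Matrix.sub_apply, Matrix.diagonal_apply_ne _ hAB,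
        SignedGraph.adjMatrix, Matrix.of_apply, hsign, zero_sub]
      simp only [show ((posSG G).token k).G = SignedGraph.tokenAdj G k from rfl]
      norm_num
    rw [hL, ← sum_ite_swap G k A B hAB, ← Finset.sum_neg_distrib]
    refine Finset.sum_congr rfl (fun e _ => ?_)
    by_cases h : swapT k e A = B <;>
      simp [Matrix.sub_apply, Matrix.one_apply_ne hAB, pmat, h]

lemma central (k : ℕ) (π : Equiv.Perm V) :
    pmat (permT k π) * (∑ e ∈ EF (⊤ : SimpleGraph V), pmat (swapT k e))
      = (∑ e ∈ EF (⊤ : SimpleGraph V), pmat (swapT k e)) * pmat (permT k π) := by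
  rw [Finset.mul_sum, Finset.sum_mul]
  have hmem : ∀ e : Sym2 V, e ∈ EF (⊤ : SimpleGraph V) ↔ ¬ e.IsDiag := by
    intro e
    rw [mem_EF, SimpleGraph.edgeSet_top, Set.mem_compl_iff, Sym2.mem_diagSet]
  refine Finset.sum_nbij' (i := Sym2.map π.symm) (j := Sym2.map π) ?_ ?_ ?_ ?_ ?_
  · intro e he
    rw [hmem] at he ⊢
    rwa [Sym2.isDiag_map π.symm.injective]
  · intro e he
    rw [hmem] at he ⊢
    rwa [Sym2.isDiag_map π.injective]
  · intro e _
    rw [Sym2.map_map]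
    have h : ⇑π ∘ ⇑π.symm = id := by funext x; simp
    rw [h, Sym2.map_id]
    rfl
  · intro e _
    rw [Sym2.map_map]
    have h : ⇑π.symm ∘ ⇑π = id := by funext x; simp
    rw [h, Sym2.map_id]
    rfl
  · intro e _
    revert e
    refine Sym2.ind (fun a b => fun _ => ?_)
    rw [Sym2.map_pair_eq, swapT_mk, swapT_mk, ← pmat_mul, ← pmat_mul,
      ← permT_mul, ← permT_mul]
    congr 2
    have hs : π.symm a = π⁻¹ a := rfl
    have hs' : π.symm b = π⁻¹ b := rfl
    rw [hs, hs', Equiv.swap_apply_apply]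
    group

lemma swap_central (k : ℕ) (e : Sym2 V) :
    pmat (swapT k e) * (∑ e ∈ EF (⊤ : SimpleGraph V), pmat (swapT k e))
      = (∑ e ∈ EF (⊤ : SimpleGraph V), pmat (swapT k e)) * pmat (swapT k e) := by
  revert e
  refine Sym2.ind (fun a b => ?_)
  rw [swapT_mk]
  exact central k (Equiv.swap a b)

lemma sum_lap_central (G : SimpleGraph V) (k : ℕ) :
    (∑ e ∈ EF G, pmat (swapT k e))
        * (∑ e ∈ EF (⊤ : SimpleGraph V), pmat (swapT k e))
      = (∑ e ∈ EF (⊤ : SimpleGraph V), pmat (swapT k e))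
        * (∑ e ∈ EF G, pmat (swapT k e)) := by
  rw [Finset.sum_mul, Finset.mul_sum]
  exact Finset.sum_congr rfl (fun e _ => swap_central k e)

lemma lap_sum (G : SimpleGraph V) (k : ℕ) :
    ((posSG G).token k).lapMatrix + ((posSG Gᶜ).token k).lapMatrix
      = ((posSG ⊤).token k).lapMatrix := by
  have hdisj : Disjoint (EF G) (EF Gᶜ) := by
    rw [Finset.disjoint_left]
    intro e he hce
    revert he hce
    refine Sym2.ind (fun a b => ?_) e
    intro he hce
    rw [mem_EF] at he hce
    rw [SimpleGraph.mem_edgeSet] at he hce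
    exact ((SimpleGraph.compl_adj G a b).mp hce).2 he
  rw [lap_pos, lap_pos, lap_pos]
  symm
  refine (Finset.sum_congr ?_ (fun _ _ => rfl)).trans (Finset.sum_union hdisj)
  ext e
  refine Sym2.ind (fun a b => ?_) e
  simp only [mem_EF, Finset.mem_union, SimpleGraph.mem_edgeSet,
    SimpleGraph.top_adj, SimpleGraph.compl_adj]
  have hne := fun (h : G.Adj a b) => G.ne_of_adj h
  tauto

set_option maxHeartbeats 1000000 in
lemma lap_commute (G : SimpleGraph V) (k : ℕ) :
    ((posSG G).token k).lapMatrix * ((posSG Gᶜ).token k).lapMatrix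
      = ((posSG Gᶜ).token k).lapMatrix * ((posSG G).token k).lapMatrix := by
  have hsmul : ∀ (c : ℝ) (M : Matrix (TT V k) (TT V k) ℝ), Commute (c • 1) M := by
    intro c M
    show (c • 1) * M = M * (c • 1)
    rw [smul_mul_assoc, one_mul, mul_smul_comm, mul_one]
  have expand : ∀ (H : SimpleGraph V),
      ∑ e ∈ EF H, ((1 : Matrix (TT V k) (TT V k) ℝ) - pmat (swapT k e))
        = ((EF H).card : ℝ) • (1 : Matrix (TT V k) (TT V k) ℝ)
          - ∑ e ∈ EF H, pmat (swapT k e) := by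
    intro H
    rw [Finset.sum_sub_distrib, Finset.sum_const, ← Nat.cast_smul_eq_nsmul ℝ]
  have key : ((posSG G).token k).lapMatrix * ((posSG ⊤).token k).lapMatrix
      = ((posSG ⊤).token k).lapMatrix * ((posSG G).token k).lapMatrix := by
    rw [lap_pos, lap_pos, expand G, expand ⊤]
    set a := ((EF G).card : ℝ) with ha
    set bb := (((EF (⊤ : SimpleGraph V)).card : ℝ)) with hbb
    set M1 := ∑ e ∈ EF G, pmat (swapT k e) with hM1
    set M2 := ∑ e ∈ EF (⊤ : SimpleGraph V), pmat (swapT k e) with hM2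
    have h12 : Commute M1 M2 := sum_lap_central G k
    have hcomm : Commute (a • 1 - M1) (bb • 1 - M2) :=
      ((hsmul a (bb • (1 : Matrix (TT V k) (TT V k) ℝ))).sub_right (hsmul a M2)).sub_left
        ((hsmul bb M1).symm.sub_right h12)
    exact hcomm
  have hcompl : ((posSG Gᶜ).token k).lapMatrix
      = ((posSG ⊤).token k).lapMatrix - ((posSG G).token k).lapMatrix := by
    rw [← lap_sum G k]; abel
  rw [hcompl, mul_sub, sub_mul, key]

end TokenProof

namespace TokenProof

open Polynomial Module

variable {V : Type*} [DecidableEq V]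

lemma lap_herm {W : Type*} [DecidableEq W] [Fintype W] (Δ : SignedGraph W) : Δ.lapMatrix.IsHermitian := by
  rw [Matrix.IsHermitian]
  ext i j
  rw [Matrix.conjTranspose_apply, star_trivial]
  simp only [SignedGraph.lapMatrix, Matrix.sub_apply, SignedGraph.adjMatrix, Matrix.of_apply]
  by_cases h : i = j
  · subst h; rfl
  · have h1 : Δ.G.Adj j i ↔ Δ.G.Adj i j := Δ.G.adj_comm j i
    have h2 : Δ.sign j i = Δ.sign i j := Δ.sign_symm j i
    simp [Matrix.diagonal_apply_ne, h, Ne.symm h, h1, h2]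

lemma charpoly_conj {m' : Type*} [Fintype m'] [DecidableEq m'] (S M : Matrix m' m' ℝ)
    (hS : S * S = 1) : (S * M * S).charpoly = M.charpoly := by
  have h1 : (S.map (C : ℝ → ℝ[X])) * (S.map C) = 1 := by
    rw [← Matrix.map_mul (f := (C : ℝ →+* ℝ[X])), hS, Matrix.map_one _ (map_zero C) (map_one C)]
  have hc : (S * M * S).charmatrix = (S.map C) * M.charmatrix * (S.map C) := by
    unfold Matrix.charmatrix
    have h2 : (C : ℝ →+* ℝ[X]).mapMatrix (S * M * S)
        = (S.map C) * ((C : ℝ →+* ℝ[X]).mapMatrix M) * (S.map C) := by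
      show (S * M * S).map (C : ℝ → ℝ[X]) = _
      rw [Matrix.map_mul (f := (C : ℝ →+* ℝ[X])), Matrix.map_mul (f := (C : ℝ →+* ℝ[X]))]
      rfl
    rw [h2, mul_sub, sub_mul]
    congr 1
    have hcomm : Matrix.scalar m' (X : ℝ[X]) * (S.map C) = (S.map C) * Matrix.scalar m' X :=
      (Matrix.scalar_commute (X : ℝ[X]) (fun r => Commute.all X r) (S.map C)).symm ▸
        ((Matrix.scalar_commute (X : ℝ[X]) (fun r => Commute.all X r) (S.map C))).eq
    rw [← hcomm, mul_assoc, h1, mul_one]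
  rw [Matrix.charpoly, Matrix.charpoly, hc, Matrix.det_mul, Matrix.det_mul]
  have h3 : (S.map (C : ℝ → ℝ[X])).det * (S.map C).det = 1 := by
    rw [← Matrix.det_mul, h1, Matrix.det_one]
  calc (S.map (C : ℝ → ℝ[X])).det * M.charmatrix.det * (S.map C).det
      = ((S.map (C : ℝ → ℝ[X])).det * (S.map C).det) * M.charmatrix.det := by ring
    _ = M.charmatrix.det := by rw [h3, one_mul]

variable [Fintype V]

/-- the diagonal `±1` matrix on `k`-subsets -/
noncomputable def skMat (k : ℕ) (s : V → ℤˣ) : Matrix (TT V k) (TT V k) ℝ :=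
  Matrix.diagonal (fun A => ∏ v ∈ A.1, ((s v : ℤ) : ℝ))

lemma sign_sq (s : V → ℤˣ) (v : V) : ((s v : ℤ) : ℝ) * ((s v : ℤ) : ℝ) = 1 := by
  rw [← Int.cast_mul, ← Units.val_mul, Int.units_mul_self, Units.val_one, Int.cast_one]

lemma prod_sign_sq (s : V → ℤˣ) (T : Finset V) :
    (∏ v ∈ T, ((s v : ℤ) : ℝ)) * (∏ v ∈ T, ((s v : ℤ) : ℝ)) = 1 := by
  rw [← Finset.prod_mul_distrib]
  exact Finset.prod_eq_one (fun v _ => sign_sq s v)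

lemma skMat_sq (k : ℕ) (s : V → ℤˣ) : skMat k s * skMat k s = 1 := by
  rw [skMat, Matrix.diagonal_mul_diagonal]
  have h : (fun A : TT V k => (∏ v ∈ A.1, ((s v : ℤ) : ℝ)) * ∏ v ∈ A.1, ((s v : ℤ) : ℝ))
      = fun _ => (1 : ℝ) := by
    funext A
    exact prod_sign_sq s A.1
  rw [h, Matrix.diagonal_one]

lemma sign_entry (Γ : SignedGraph V) (s : V → ℤˣ)
    (hs : ∀ u v, Γ.G.Adj u v → ((Γ.sign u v : ℤ) : ℝ) = ((s u : ℤ) : ℝ) * ((s v : ℤ) : ℝ))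
    {k : ℕ} {A B : TT V k} (h : (SignedGraph.tokenAdj Γ.G k).Adj A B) :
    (((Γ.token k).sign A B : ℤ) : ℝ)
      = (∏ v ∈ A.1, ((s v : ℤ) : ℝ)) * ∏ v ∈ B.1, ((s v : ℤ) : ℝ) := by
  obtain ⟨a, b, ha, hb, hab, hsym⟩ := h
  obtain ⟨hABa, hBAb, hbA, hBeq⟩ := tokenAdj_unpack ha hb hab hsym
  have h1 : ((Γ.token k).sign A B) = Γ.sign a b := by
    show (∏ x ∈ A.1 \ B.1, ∏ y ∈ B.1 \ A.1, Γ.sign x y) = _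
    rw [hABa, hBAb, Finset.prod_singleton, Finset.prod_singleton]
  rw [h1, hs a b hab]
  have hA : (∏ v ∈ A.1, ((s v : ℤ) : ℝ))
      = (∏ v ∈ A.1 ∩ B.1, ((s v : ℤ) : ℝ)) * ((s a : ℤ) : ℝ) := by
    rw [← Finset.prod_inter_mul_prod_diff A.1 B.1 (fun v => ((s v : ℤ) : ℝ)), hABa,
      Finset.prod_singleton]
  have hB : (∏ v ∈ B.1, ((s v : ℤ) : ℝ))
      = (∏ v ∈ A.1 ∩ B.1, ((s v : ℤ) : ℝ)) * ((s b : ℤ) : ℝ) := by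
    rw [← Finset.prod_inter_mul_prod_diff B.1 A.1 (fun v => ((s v : ℤ) : ℝ)), hBAb,
      Finset.prod_singleton, Finset.inter_comm]
  rw [hA, hB, show ((∏ v ∈ A.1 ∩ B.1, ((s v : ℤ) : ℝ)) * ((s a : ℤ) : ℝ))
      * ((∏ v ∈ A.1 ∩ B.1, ((s v : ℤ) : ℝ)) * ((s b : ℤ) : ℝ))
      = ((∏ v ∈ A.1 ∩ B.1, ((s v : ℤ) : ℝ)) * (∏ v ∈ A.1 ∩ B.1, ((s v : ℤ) : ℝ)))
        * (((s a : ℤ) : ℝ) * ((s b : ℤ) : ℝ)) from by ring,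
    prod_sign_sq, one_mul]

lemma lap_conj (Γ : SignedGraph V) (s : V → ℤˣ) (k : ℕ)
    (hs : ∀ u v, Γ.G.Adj u v → ((Γ.sign u v : ℤ) : ℝ) = ((s u : ℤ) : ℝ) * ((s v : ℤ) : ℝ)) :
    (Γ.token k).lapMatrix = skMat k s * ((posSG Γ.G).token k).lapMatrix * skMat k s := by
  ext A B
  rw [skMat, Matrix.mul_diagonal, Matrix.diagonal_mul]
  by_cases hAB : A = B
  · subst hAB
    have hdiag : ((posSG Γ.G).token k).lapMatrix A A = (Γ.token k).lapMatrix A A := by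
      simp only [SignedGraph.lapMatrix, Matrix.sub_apply, SignedGraph.adjMatrix,
        Matrix.of_apply, Matrix.diagonal_apply_eq]
      rw [if_neg (SimpleGraph.irrefl _), if_neg (SimpleGraph.irrefl _)]
      rfl
    rw [hdiag, show (∏ v ∈ A.1, ((s v : ℤ) : ℝ)) * (Γ.token k).lapMatrix A A
        * (∏ v ∈ A.1, ((s v : ℤ) : ℝ))
      = ((∏ v ∈ A.1, ((s v : ℤ) : ℝ)) * (∏ v ∈ A.1, ((s v : ℤ) : ℝ)))
        * (Γ.token k).lapMatrix A A from by ring, prod_sign_sq, one_mul]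
  · simp only [SignedGraph.lapMatrix, Matrix.sub_apply, SignedGraph.adjMatrix, Matrix.of_apply]
    rw [Matrix.diagonal_apply_ne _ hAB, Matrix.diagonal_apply_ne _ hAB, zero_sub, zero_sub]
    simp only [show (Γ.token k).G = SignedGraph.tokenAdj Γ.G k from rfl,
      show ((posSG Γ.G).token k).G = SignedGraph.tokenAdj Γ.G k from rfl]
    by_cases hadj : (SignedGraph.tokenAdj Γ.G k).Adj A B
    · rw [if_pos hadj, if_pos hadj]
      have hsign : (((posSG Γ.G).token k).sign A B) = 1 := by
        show (∏ a ∈ A.1 \ B.1, ∏ b ∈ B.1 \ A.1, (1 : ℤˣ)) = 1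
        simp
      rw [hsign, sign_entry Γ s hs hadj]
      push_cast
      ring
    · rw [if_neg hadj, if_neg hadj]
      ring

end TokenProof

/-- there are enumerations `x`, `y` of the Laplacian eigenvalues of
`F_k(Γ)` and `F_k(Γ̄_σ)` (with multiplicity) such that `x_i + y_i` enumerates the Laplacian
eigenvalues of the Johnson graph `J(n, k) = F_k(K_n)` (with multiplicity). -/
theorem token_complement_johnson_eigenvalues {V : Type*} [Fintype V] [DecidableEq V]
    (n k N : ℕ) (hn : Fintype.card V = n) (hk1 : 1 ≤ k) (hk2 : k ≤ n - 1)
    (hN : N = n.choose k)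
    (Γ : SignedGraph V) (hbal : Γ.Balanced) (s : V → ℤˣ)
    (hS : Γ.adjMatrix = SignedGraph.diagS s * Γ.G.adjMatrix ℝ * SignedGraph.diagS s) :
    ∃ (x y : Fin N → ℝ),
      (Γ.token k).lapMatrix.charpoly = ∏ i, (Polynomial.X - Polynomial.C (x i)) ∧
      ((Γ.scompl s).token k).lapMatrix.charpoly
        = ∏ i, (Polynomial.X - Polynomial.C (y i)) ∧
      ((allPos V).token k).lapMatrix.charpoly
        = ∏ i, (Polynomial.X - Polynomial.C (x i + y i)) := by
    classical
  have hs : ∀ u v, Γ.G.Adj u v →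
      ((Γ.sign u v : ℤ) : ℝ) = ((s u : ℤ) : ℝ) * ((s v : ℤ) : ℝ) := by
    intro u v huv
    have h := congrArg (fun M : Matrix V V ℝ => M u v) hS
    rw [SignedGraph.diagS, Matrix.mul_diagonal, Matrix.diagonal_mul,
      SimpleGraph.adjMatrix_apply, if_pos huv, mul_one] at h
    rw [SignedGraph.adjMatrix, Matrix.of_apply, if_pos huv] at h
    exact h
  have hs' : ∀ u v, (Γ.scompl s).G.Adj u v →
      (((Γ.scompl s).sign u v : ℤ) : ℝ) = ((s u : ℤ) : ℝ) * ((s v : ℤ) : ℝ) := by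
    intro u v _
    show (((s u * s v : ℤˣ) : ℤ) : ℝ) = _
    push_cast
    ring
  have h1 := TokenProof.lap_conj Γ s k hs
  have h2 := TokenProof.lap_conj (Γ.scompl s) s k hs'
  have hcomm := TokenProof.lap_commute Γ.G k
  have hsum := TokenProof.lap_sum Γ.G k
  obtain ⟨x0, y0, hx0, hy0, hxy0⟩ := simul_diag _ _
    (TokenProof.lap_herm ((TokenProof.posSG Γ.G).token k))
    (TokenProof.lap_herm ((TokenProof.posSG Γ.Gᶜ).token k)) hcomm
  have hcard : Fintype.card (TokenProof.TT V k) = N := by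
    rw [Fintype.card_finset_len, hn, hN]
  refine ⟨x0 ∘ (finCongr hcard).symm, y0 ∘ (finCongr hcard).symm, ?_, ?_, ?_⟩
  · rw [h1, TokenProof.charpoly_conj _ _ (TokenProof.skMat_sq k s), hx0]
    exact (Equiv.prod_comp (finCongr hcard).symm
      (fun j => Polynomial.X - Polynomial.C (x0 j))).symm
  · rw [h2, TokenProof.charpoly_conj _ _ (TokenProof.skMat_sq k s)]
    have hrfl : ((TokenProof.posSG (Γ.scompl s).G).token k).lapMatrix.charpoly
        = ((TokenProof.posSG Γ.Gᶜ).token k).lapMatrix.charpoly := rfl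
    rw [hrfl, hy0]
    exact (Equiv.prod_comp (finCongr hcard).symm
      (fun j => Polynomial.X - Polynomial.C (y0 j))).symm
  · show ((TokenProof.posSG (⊤ : SimpleGraph V)).token k).lapMatrix.charpoly = _
    rw [← hsum, hxy0]
    exact (Equiv.prod_comp (finCongr hcard).symm
      (fun j => Polynomial.X - Polynomial.C (x0 j + y0 j))).symm
end
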